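/- arXiv:1505.07403 — 7 statements merged into one kernel-verified Lean document; each statement's English description precedes it below -/
import Mathlib

section
/- Let N ≥ 1, R > 0, Γ ∈ (0,1) and Q ∈ (0,∞), and let Ω = B_R be the open Euclidean ball of radius R centered at the origin in ℝ^N. Then the limit eigenvalue Λ_∞(Γ,Q;B_R), defined as the infimum over the admissible class A_∞(B_R) of the quotient max{Lip(w), Lip(z)^Q} / max_{x ∈ cl(B_R)} (|w(x)|^Γ |z(x)|^{(1−Γ)Q}), equals exactly ((Γ + Q(1−Γ))/(Γ R))^Γ · ((Γ + Q(1−Γ))/(Q(1−Γ) R))^{(1−Γ)Q}. -/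
open Real Set Filter

noncomputable section

/-- The best Lipschitz constant of `f` on the set `S`. -/
def bestLip {N : ℕ} (f : EuclideanSpace ℝ (Fin N) → ℝ)
    (S : Set (EuclideanSpace ℝ (Fin N))) : ℝ :=
  sInf {K : ℝ | 0 ≤ K ∧ ∀ x ∈ S, ∀ y ∈ S, |f x - f y| ≤ K * dist x y}

/-- `f` is Lipschitz on the set `S`. -/
def IsLipschitzOnSet {N : ℕ} (f : EuclideanSpace ℝ (Fin N) → ℝ)
    (S : Set (EuclideanSpace ℝ (Fin N))) : Prop :=
  ∃ K : NNReal, LipschitzOnWith K f S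

/-- The admissible class `A_∞(Ω)`: pairs `(w,z)` of Lipschitz functions on `cl Ω`,
with `w = 0` on `∂Ω`, `w·z` not identically zero on `cl Ω`, and
`max_{cl Ω} |w|^Γ (z⁺)^{(1-Γ)Q} = max_{cl Ω} |w|^Γ (z⁻)^{(1-Γ)Q}`. -/
def AdmClass {N : ℕ} (Γ Q : ℝ) (Ω : Set (EuclideanSpace ℝ (Fin N))) :
    Set ((EuclideanSpace ℝ (Fin N) → ℝ) × (EuclideanSpace ℝ (Fin N) → ℝ)) :=
  {wz | IsLipschitzOnSet wz.1 (closure Ω) ∧ IsLipschitzOnSet wz.2 (closure Ω) ∧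
    (∀ x ∈ frontier Ω, wz.1 x = 0) ∧
    (∃ x ∈ closure Ω, wz.1 x * wz.2 x ≠ 0) ∧
    sSup ((fun x => |wz.1 x| ^ Γ * (max (wz.2 x) 0) ^ ((1 - Γ) * Q)) '' closure Ω) =
      sSup ((fun x => |wz.1 x| ^ Γ * (max (-wz.2 x) 0) ^ ((1 - Γ) * Q)) '' closure Ω)}

/-- The limit eigenvalue `Λ_∞(Γ,Q;Ω)`. -/
def LambdaInfty {N : ℕ} (Γ Q : ℝ) (Ω : Set (EuclideanSpace ℝ (Fin N))) : ℝ :=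
  sInf ((fun wz => max (bestLip wz.1 (closure Ω)) (bestLip wz.2 (closure Ω) ^ Q) /
    sSup ((fun x => |wz.1 x| ^ Γ * |wz.2 x| ^ ((1 - Γ) * Q)) '' closure Ω)) ''
      AdmClass Γ Q Ω)

lemma bestLip_nonneg {N : ℕ} (f : EuclideanSpace ℝ (Fin N) → ℝ) (S) :
    0 ≤ bestLip f S :=
  Real.sInf_nonneg (fun _ hK => hK.1)

lemma bestLip_le {N : ℕ} {f : EuclideanSpace ℝ (Fin N) → ℝ} {S} {K : ℝ}
    (hK : 0 ≤ K) (h : ∀ x ∈ S, ∀ y ∈ S, |f x - f y| ≤ K * dist x y) :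
    bestLip f S ≤ K :=
  csInf_le ⟨0, fun _ hk => hk.1⟩ ⟨hK, h⟩

lemma bestLip_spec {N : ℕ} {f : EuclideanSpace ℝ (Fin N) → ℝ} {S}
    (hf : IsLipschitzOnSet f S) {x y} (hx : x ∈ S) (hy : y ∈ S) :
    |f x - f y| ≤ bestLip f S * dist x y := by
  obtain ⟨K, hK⟩ := hf
  have hmem : (K : ℝ) ∈ {K : ℝ | 0 ≤ K ∧ ∀ x ∈ S, ∀ y ∈ S, |f x - f y| ≤ K * dist x y} := by
    refine ⟨K.2, fun a ha b hb => ?_⟩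
    have := hK.dist_le_mul a ha b hb
    rwa [Real.dist_eq] at this
  rcases eq_or_lt_of_le (dist_nonneg (x := x) (y := y)) with hd | hd
  · have hxy : x = y := by
      rw [← dist_le_zero]; exact le_of_eq hd.symm
    simp [hxy]
  · have h1 : |f x - f y| / dist x y ≤ bestLip f S := by
      apply le_csInf ⟨_, hmem⟩
      intro k hk
      rw [div_le_iff₀ hd]
      exact hk.2 x hx y hy
    calc |f x - f y| = |f x - f y| / dist x y * dist x y := by field_simp
    _ ≤ bestLip f S * dist x y := mul_le_mul_of_nonneg_right h1 hd.le

lemma amgm_aux {Γ β R d c : ℝ} (hΓ : 0 < Γ) (hβ : 0 < β) (hR : 0 < R)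
    (hd : 0 ≤ d) (hc : 0 ≤ c) (hsum : d + c ≤ R) :
    d ^ Γ * c ^ β ≤ (Γ * R / (Γ + β)) ^ Γ * (β * R / (Γ + β)) ^ β := by
  have hs : 0 < Γ + β := by linarith
  rcases eq_or_lt_of_le hd with h0 | hd
  · rw [← h0, Real.zero_rpow hΓ.ne', zero_mul]
    positivity
  rcases eq_or_lt_of_le hc with h0 | hc
  · rw [← h0, Real.zero_rpow hβ.ne', mul_zero]
    positivity
  have key := Real.geom_mean_le_arith_mean2_weighted
    (by positivity : (0:ℝ) ≤ Γ / (Γ + β)) (by positivity : (0:ℝ) ≤ β / (Γ + β))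
    (by positivity : (0:ℝ) ≤ d * (Γ + β) / Γ) (by positivity : (0:ℝ) ≤ c * (Γ + β) / β)
    (by field_simp)
  have hrhs : Γ / (Γ + β) * (d * (Γ + β) / Γ) + β / (Γ + β) * (c * (Γ + β) / β) = d + c := by
    field_simp
  rw [hrhs] at key
  have key2 : ((d * (Γ + β) / Γ) ^ (Γ / (Γ + β)) * (c * (Γ + β) / β) ^ (β / (Γ + β))) ^ (Γ + β)
      ≤ R ^ (Γ + β) :=
    Real.rpow_le_rpow (by positivity) (key.trans hsum) hs.le
  rw [Real.mul_rpow (by positivity) (by positivity),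
    ← Real.rpow_mul (by positivity), ← Real.rpow_mul (by positivity),
    div_mul_cancel₀ _ hs.ne', div_mul_cancel₀ _ hs.ne'] at key2
  have hA : d ^ Γ = (d * (Γ + β) / Γ) ^ Γ * (Γ / (Γ + β)) ^ Γ := by
    rw [← Real.mul_rpow (by positivity) (by positivity)]
    congr 1; field_simp
  have hB : c ^ β = (c * (Γ + β) / β) ^ β * (β / (Γ + β)) ^ β := by
    rw [← Real.mul_rpow (by positivity) (by positivity)]
    congr 1; field_simp
  have hC : (Γ * R / (Γ + β)) ^ Γ = R ^ Γ * (Γ / (Γ + β)) ^ Γ := by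
    rw [← Real.mul_rpow hR.le (by positivity)]
    congr 1; ring
  have hD : (β * R / (Γ + β)) ^ β = R ^ β * (β / (Γ + β)) ^ β := by
    rw [← Real.mul_rpow hR.le (by positivity)]
    congr 1; ring
  rw [hA, hB, hC, hD]
  have e1 : (d * (Γ + β) / Γ) ^ Γ * (Γ / (Γ + β)) ^ Γ * ((c * (Γ + β) / β) ^ β * (β / (Γ + β)) ^ β)
      = ((d * (Γ + β) / Γ) ^ Γ * (c * (Γ + β) / β) ^ β) * ((Γ / (Γ + β)) ^ Γ * (β / (Γ + β)) ^ β) := by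
    ring
  have e2 : R ^ Γ * (Γ / (Γ + β)) ^ Γ * (R ^ β * (β / (Γ + β)) ^ β)
      = (R ^ Γ * R ^ β) * ((Γ / (Γ + β)) ^ Γ * (β / (Γ + β)) ^ β) := by ring
  rw [e1, e2, ← Real.rpow_add hR]
  exact mul_le_mul_of_nonneg_right key2 (by positivity)

lemma construction {N : ℕ} (hN : 1 ≤ N) {R Γ Q : ℝ} (hR : 0 < R)
    (hΓ0 : 0 < Γ) (hΓ1 : Γ < 1) (hQ : 0 < Q) :
    ∃ wz ∈ AdmClass Γ Q (Metric.ball (0 : EuclideanSpace ℝ (Fin N)) R),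
      max (bestLip wz.1 (closure (Metric.ball (0 : EuclideanSpace ℝ (Fin N)) R)))
          (bestLip wz.2 (closure (Metric.ball (0 : EuclideanSpace ℝ (Fin N)) R)) ^ Q) /
        sSup ((fun x => |wz.1 x| ^ Γ * |wz.2 x| ^ ((1 - Γ) * Q)) ''
          closure (Metric.ball (0 : EuclideanSpace ℝ (Fin N)) R))
      ≤ 1 / ((Γ * R / (Γ + (1 - Γ) * Q)) ^ Γ *
          ((1 - Γ) * Q * R / (Γ + (1 - Γ) * Q)) ^ ((1 - Γ) * Q)) := by
  have hβ : 0 < (1 - Γ) * Q := mul_pos (by linarith) hQ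
  set β := (1 - Γ) * Q with hβdef
  set s := Γ + β with hsdef
  have hs : 0 < s := by positivity
  set δ := Γ * R / s with hδdef
  set c := β * R / s with hcdef
  have hδ : 0 < δ := by positivity
  have hc : 0 < c := by positivity
  have hδc : δ + c = R := by
    rw [hδdef, hcdef, ← add_div, hsdef]; field_simp
  have hcR : c < R := by linarith
  set i0 : Fin N := ⟨0, hN⟩
  set e : EuclideanSpace ℝ (Fin N) := EuclideanSpace.single i0 1 with he_def
  have he : ‖e‖ = 1 := by simp [he_def]
  set p : EuclideanSpace ℝ (Fin N) := c • e with hp_def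
  have hpn : ‖p‖ = c := by
    rw [hp_def, norm_smul, he, mul_one]; exact abs_of_pos hc
  have hpnn : ‖-p‖ = c := by rw [norm_neg]; exact hpn
  set w : EuclideanSpace ℝ (Fin N) → ℝ :=
    fun x => max 0 (max (δ - dist x p) (δ - dist x (-p))) with hw_def
  set z : EuclideanSpace ℝ (Fin N) → ℝ := fun x => (inner ℝ x e : ℝ) with hz_def
  have hcl : closure (Metric.ball (0:EuclideanSpace ℝ (Fin N)) R) = Metric.closedBall 0 R :=
    closure_ball 0 hR.ne'
  have hfr : frontier (Metric.ball (0:EuclideanSpace ℝ (Fin N)) R) = Metric.sphere 0 R :=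
    frontier_ball 0 hR.ne'
  -- pointwise Lipschitz bounds
  have hwlip : ∀ x y : EuclideanSpace ℝ (Fin N), |w x - w y| ≤ dist x y := by
    intro x y
    have k1 : |(δ - dist x p) - (δ - dist y p)| ≤ dist x y := by
      rw [show (δ - dist x p) - (δ - dist y p) = dist y p - dist x p by ring, abs_sub_comm]
      exact abs_dist_sub_le x y p
    have k2 : |(δ - dist x (-p)) - (δ - dist y (-p))| ≤ dist x y := by
      rw [show (δ - dist x (-p)) - (δ - dist y (-p)) = dist y (-p) - dist x (-p) by ring,
        abs_sub_comm]
      exact abs_dist_sub_le x y (-p)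
    have k3 := abs_max_sub_max_le_max (0:ℝ) (max (δ - dist x p) (δ - dist x (-p))) 0
      (max (δ - dist y p) (δ - dist y (-p)))
    refine le_trans k3 (max_le (by simpa using dist_nonneg) ?_)
    exact le_trans (abs_max_sub_max_le_max _ _ _ _) (max_le k1 k2)
  have hzlip : ∀ x y : EuclideanSpace ℝ (Fin N), |z x - z y| ≤ dist x y := by
    intro x y
    simp only [hz_def]
    calc |(inner ℝ x e : ℝ) - (inner ℝ y e : ℝ)| = |(inner ℝ (x - y) e : ℝ)| := by
          rw [inner_sub_left]
    _ ≤ ‖x - y‖ * ‖e‖ := abs_real_inner_le_norm _ _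
    _ = dist x y := by rw [he, mul_one, dist_eq_norm]
  have hwL : IsLipschitzOnSet w (closure (Metric.ball (0:EuclideanSpace ℝ (Fin N)) R)) := by
    refine ⟨1, LipschitzOnWith.of_dist_le_mul fun x _ y _ => ?_⟩
    rw [Real.dist_eq, NNReal.coe_one, one_mul]; exact hwlip x y
  have hzL : IsLipschitzOnSet z (closure (Metric.ball (0:EuclideanSpace ℝ (Fin N)) R)) := by
    refine ⟨1, LipschitzOnWith.of_dist_le_mul fun x _ y _ => ?_⟩
    rw [Real.dist_eq, NNReal.coe_one, one_mul]; exact hzlip x y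
  -- values
  have hwp : w p = δ := by
    rw [hw_def]
    simp only [dist_self, sub_zero]
    rw [max_eq_left (by linarith [dist_nonneg (x := p) (y := -p)] : δ - dist p (-p) ≤ δ),
      max_eq_right hδ.le]
  have hzp : z p = c := by
    rw [hz_def, hp_def]
    simp only
    rw [real_inner_smul_left, real_inner_self_eq_norm_sq, he]; ring
  have hzq : z (-p) = -c := by
    have h := hzp
    simp only [hz_def] at h ⊢
    rw [inner_neg_left, h]
  have hz0 : z 0 = 0 := by simp only [hz_def]; exact inner_zero_left e
  -- boundary vanishing
  have hwb : ∀ x ∈ Metric.sphere (0:EuclideanSpace ℝ (Fin N)) R, w x = 0 := by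
    intro x hx
    have hxn : ‖x‖ = R := by rwa [mem_sphere_zero_iff_norm] at hx
    have d1 : δ ≤ dist x p := by
      have h := norm_sub_norm_le x p
      rw [hxn, hpn] at h
      rw [dist_eq_norm]; linarith
    have d2 : δ ≤ dist x (-p) := by
      have h := norm_sub_norm_le x (-p)
      rw [hxn, hpnn] at h
      rw [dist_eq_norm]; linarith
    simp only [hw_def]
    rw [max_eq_left]
    exact max_le (by linarith) (by linarith)
  -- symmetry
  have hwneg : ∀ x : EuclideanSpace ℝ (Fin N), w (-x) = w x := by
    intro x
    have e1 : dist (-x) p = dist x (-p) := by rw [← dist_neg_neg, neg_neg]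
    have e2 : dist (-x) (-p) = dist x p := dist_neg_neg x p
    simp only [hw_def, e1, e2]
    rw [max_comm (δ - dist x (-p)) (δ - dist x p)]
  have hzneg : ∀ x : EuclideanSpace ℝ (Fin N), z (-x) = - z x := by
    intro x; simp only [hz_def]; exact inner_neg_left x e
  have hpK : p ∈ Metric.closedBall (0:EuclideanSpace ℝ (Fin N)) R := by
    rw [mem_closedBall_zero_iff, hpn]; exact hcR.le
  -- membership in the admissible class
  have hmem : (w, z) ∈ AdmClass Γ Q (Metric.ball (0:EuclideanSpace ℝ (Fin N)) R) := by
    refine ⟨hwL, hzL, ?_, ?_, ?_⟩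
    · intro x hx; rw [hfr] at hx; exact hwb x hx
    · refine ⟨p, by rw [hcl]; exact hpK, ?_⟩
      show w p * z p ≠ 0
      rw [hwp, hzp]; positivity
    · show sSup ((fun x => |w x| ^ Γ * (max (z x) 0) ^ ((1 - Γ) * Q)) '' _) = _
      rw [hcl]
      have himg : (fun x => |w x| ^ Γ * (max (z x) 0) ^ ((1 - Γ) * Q)) ''
            Metric.closedBall (0:EuclideanSpace ℝ (Fin N)) R
          = (fun x => |w x| ^ Γ * (max (-z x) 0) ^ ((1 - Γ) * Q)) ''
            Metric.closedBall (0:EuclideanSpace ℝ (Fin N)) R := by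
        ext t
        simp only [mem_image]
        constructor
        · rintro ⟨x, hx, rfl⟩
          refine ⟨-x, ?_, ?_⟩
          · rw [mem_closedBall_zero_iff] at hx ⊢; rwa [norm_neg]
          · show |w (-x)| ^ Γ * (max (-z (-x)) 0) ^ ((1 - Γ) * Q) = _
            rw [hwneg, hzneg, neg_neg]
        · rintro ⟨x, hx, rfl⟩
          refine ⟨-x, ?_, ?_⟩
          · rw [mem_closedBall_zero_iff] at hx ⊢; rwa [norm_neg]
          · show |w (-x)| ^ Γ * (max (z (-x)) 0) ^ ((1 - Γ) * Q) = _
            rw [hwneg, hzneg]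
      rw [himg]
  refine ⟨(w, z), hmem, ?_⟩
  rw [hcl]
  -- numerator bound
  have h1 : bestLip w (Metric.closedBall (0:EuclideanSpace ℝ (Fin N)) R) ≤ 1 :=
    bestLip_le zero_le_one (fun x _ y _ => by rw [one_mul]; exact hwlip x y)
  have h2 : bestLip z (Metric.closedBall (0:EuclideanSpace ℝ (Fin N)) R) ≤ 1 :=
    bestLip_le zero_le_one (fun x _ y _ => by rw [one_mul]; exact hzlip x y)
  have hnum : max (bestLip w (Metric.closedBall (0:EuclideanSpace ℝ (Fin N)) R))
      (bestLip z (Metric.closedBall (0:EuclideanSpace ℝ (Fin N)) R) ^ Q) ≤ 1 :=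
    max_le h1 (Real.rpow_le_one (bestLip_nonneg _ _) h2 hQ.le)
  -- denominator bound
  have hbdd : BddAbove ((fun x => |w x| ^ Γ * |z x| ^ ((1 - Γ) * Q)) ''
      Metric.closedBall (0:EuclideanSpace ℝ (Fin N)) R) := by
    refine ⟨δ ^ Γ * R ^ ((1 - Γ) * Q), ?_⟩
    rintro t ⟨x, hx, rfl⟩
    have hw1 : |w x| ≤ δ := by
      have hnn : (0:ℝ) ≤ w x := le_max_left _ _
      rw [abs_of_nonneg hnn]
      exact max_le hδ.le (max_le (by linarith [dist_nonneg (x := x) (y := p)])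
        (by linarith [dist_nonneg (x := x) (y := -p)]))
    have hz1 : |z x| ≤ R := by
      have hb : |z x| ≤ ‖x‖ := by
        simp only [hz_def]
        calc |(inner ℝ x e : ℝ)| ≤ ‖x‖ * ‖e‖ := abs_real_inner_le_norm _ _
        _ = ‖x‖ := by rw [he, mul_one]
      rw [mem_closedBall_zero_iff] at hx
      linarith
    exact mul_le_mul (Real.rpow_le_rpow (abs_nonneg _) hw1 hΓ0.le)
      (Real.rpow_le_rpow (abs_nonneg _) hz1 hβ.le) (by positivity) (by positivity)
  have hMm : δ ^ Γ * c ^ ((1 - Γ) * Q) ≤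
      sSup ((fun x => |w x| ^ Γ * |z x| ^ ((1 - Γ) * Q)) ''
        Metric.closedBall (0:EuclideanSpace ℝ (Fin N)) R) := by
    have hFp : (fun x => |w x| ^ Γ * |z x| ^ ((1 - Γ) * Q)) p = δ ^ Γ * c ^ ((1 - Γ) * Q) := by
      show |w p| ^ Γ * |z p| ^ ((1 - Γ) * Q) = _
      rw [hwp, hzp, abs_of_pos hδ, abs_of_pos hc]
    rw [← hFp]
    exact le_csSup hbdd ⟨p, hpK, rfl⟩
  have hm : 0 < δ ^ Γ * c ^ ((1 - Γ) * Q) := by positivity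
  exact div_le_div₀ zero_le_one hnum hm hMm

lemma amq_aux {x y : ℝ} : x * y ≤ ((x + y) / 2) * ((x + y) / 2) := by
  nlinarith [sq_nonneg (x - y)]

lemma aux_i1 {L dp dm D : ℝ} (hL : 0 ≤ L) (h : dp * dm ≤ D * D) :
    (L * dp) * (L * dm) ≤ (L * D) * (L * D) := by
  have h2 : L * L * (dp * dm) ≤ L * L * (D * D) :=
    mul_le_mul_of_nonneg_left h (mul_nonneg hL hL)
  nlinarith [h2]

lemma sq_le_imp {M X : ℝ} (hM : 0 < M) (hX : 0 ≤ X) (h : M * M ≤ X * X) : M ≤ X := by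
  nlinarith

set_option maxHeartbeats 2000000 in
lemma lower_bound {N : ℕ} (hN : 1 ≤ N) {R Γ Q : ℝ} (hR : 0 < R)
    (hΓ0 : 0 < Γ) (hΓ1 : Γ < 1) (hQ : 0 < Q)
    {wz : (EuclideanSpace ℝ (Fin N) → ℝ) × (EuclideanSpace ℝ (Fin N) → ℝ)}
    (hwz : wz ∈ AdmClass Γ Q (Metric.ball (0 : EuclideanSpace ℝ (Fin N)) R)) :
    1 / ((Γ * R / (Γ + (1 - Γ) * Q)) ^ Γ *
        ((1 - Γ) * Q * R / (Γ + (1 - Γ) * Q)) ^ ((1 - Γ) * Q))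
      ≤ max (bestLip wz.1 (closure (Metric.ball (0 : EuclideanSpace ℝ (Fin N)) R)))
          (bestLip wz.2 (closure (Metric.ball (0 : EuclideanSpace ℝ (Fin N)) R)) ^ Q) /
        sSup ((fun x => |wz.1 x| ^ Γ * |wz.2 x| ^ ((1 - Γ) * Q)) ''
          closure (Metric.ball (0 : EuclideanSpace ℝ (Fin N)) R)) := by
  have hcl : closure (Metric.ball (0:EuclideanSpace ℝ (Fin N)) R) = Metric.closedBall 0 R :=
    closure_ball 0 hR.ne'
  have hfr : frontier (Metric.ball (0:EuclideanSpace ℝ (Fin N)) R) = Metric.sphere 0 R :=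
    frontier_ball 0 hR.ne'
  obtain ⟨hwL, hzL, hbd, hnz, hsym⟩ := hwz
  rw [hcl] at hwL hzL hnz hsym ⊢
  rw [hfr] at hbd
  obtain ⟨x0, hx0, hx0ne⟩ := hnz
  set w := wz.1 with hw_def
  set z := wz.2 with hz_def
  have hβ : 0 < (1 - Γ) * Q := mul_pos (by linarith) hQ
  set β := (1 - Γ) * Q with hβdef
  set s := Γ + β with hsdef
  have hs : 0 < s := by positivity
  set δ := Γ * R / s with hδdef
  set c := β * R / s with hcdef
  have hδ : 0 < δ := by positivity
  have hc : 0 < c := by positivity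
  set m := δ ^ Γ * c ^ β with hmdef
  have hm : 0 < m := by positivity
  set K := Metric.closedBall (0:EuclideanSpace ℝ (Fin N)) R with hK_def
  have hKc : IsCompact K := isCompact_closedBall 0 R
  have hKne : K.Nonempty := ⟨0, Metric.mem_closedBall_self hR.le⟩
  have hwC : ContinuousOn w K := by obtain ⟨K', h⟩ := hwL; exact h.continuousOn
  have hzC : ContinuousOn z K := by obtain ⟨K', h⟩ := hzL; exact h.continuousOn
  set F : EuclideanSpace ℝ (Fin N) → ℝ := fun x => |w x| ^ Γ * |z x| ^ β with hF_def
  set Fp : EuclideanSpace ℝ (Fin N) → ℝ := fun x => |w x| ^ Γ * (max (z x) 0) ^ β with hFp_def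
  set Fm : EuclideanSpace ℝ (Fin N) → ℝ := fun x => |w x| ^ Γ * (max (-z x) 0) ^ β with hFm_def
  have cw : ContinuousOn (fun x => |w x| ^ Γ) K :=
    hwC.abs.rpow_const (fun x _ => Or.inr hΓ0.le)
  have cF : ContinuousOn F K :=
    cw.mul (hzC.abs.rpow_const (fun x _ => Or.inr hβ.le))
  have cFp : ContinuousOn Fp K :=
    cw.mul ((((continuous_id'.max continuous_const).comp_continuousOn hzC)).rpow_const
      (fun x _ => Or.inr hβ.le))
  have cFm : ContinuousOn Fm K :=
    cw.mul ((((continuous_id'.max continuous_const).comp_continuousOn hzC.neg)).rpow_const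
      (fun x _ => Or.inr hβ.le))
  have hbF : BddAbove (F '' K) := (hKc.image_of_continuousOn cF).bddAbove
  have hbFp : BddAbove (Fp '' K) := (hKc.image_of_continuousOn cFp).bddAbove
  have hbFm : BddAbove (Fm '' K) := (hKc.image_of_continuousOn cFm).bddAbove
  obtain ⟨x1, hx1K, hx1⟩ := hKc.exists_sSup_image_eq hKne cF
  obtain ⟨xp, hxpK, hxp⟩ := hKc.exists_sSup_image_eq hKne cFp
  obtain ⟨xm, hxmK, hxm⟩ := hKc.exists_sSup_image_eq hKne cFm
  -- pointwise: F = max Fp Fm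
  have hFmax : ∀ x, F x = max (Fp x) (Fm x) := by
    intro x
    have habs : |z x| ^ β = max ((max (z x) 0) ^ β) ((max (-z x) 0) ^ β) := by
      rcases le_total (z x) 0 with h | h
      · rw [abs_of_nonpos h, max_eq_right h, Real.zero_rpow hβ.ne',
          max_eq_left (neg_nonneg.mpr h),
          max_eq_right (Real.rpow_nonneg (neg_nonneg.mpr h) β)]
      · rw [abs_of_nonneg h, max_eq_left h, max_eq_right (neg_nonpos.mpr h),
          Real.zero_rpow hβ.ne', max_eq_left (Real.rpow_nonneg h β)]
    show |w x| ^ Γ * |z x| ^ β = _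
    rw [habs]
    exact mul_max_of_nonneg _ _ (Real.rpow_nonneg (abs_nonneg _) Γ)
  set M := sSup (F '' K) with hM_def
  -- M equals both one-sided sups
  have hMp : M ≤ sSup (Fp '' K) := by
    rw [hx1, hFmax x1]
    apply max_le
    · exact le_csSup hbFp ⟨x1, hx1K, rfl⟩
    · rw [hsym]; exact le_csSup hbFm ⟨x1, hx1K, rfl⟩
  have hpM : sSup (Fp '' K) ≤ M := by
    rw [hxp]
    refine le_trans ?_ (le_csSup hbF ⟨xp, hxpK, rfl⟩)
    rw [hFmax xp]; exact le_max_left _ _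
  have hMeqp : M = Fp xp := (le_antisymm hMp hpM).symm ▸ hxp ▸ rfl
  have hMeqm : M = Fm xm := by
    rw [le_antisymm hMp hpM, hsym, hxm]
  -- positivity of M
  have hM0 : 0 < M := by
    have hw0 : w x0 ≠ 0 := fun h => hx0ne (by rw [h, zero_mul])
    have hz0 : z x0 ≠ 0 := fun h => hx0ne (by rw [h, mul_zero])
    have : 0 < F x0 :=
      mul_pos (Real.rpow_pos_of_pos (abs_pos.mpr hw0) Γ)
        (Real.rpow_pos_of_pos (abs_pos.mpr hz0) β)
    exact lt_of_lt_of_le this (le_csSup hbF ⟨x0, hx0, rfl⟩)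
  -- signs at the max points
  have hzxp : 0 < z xp := by
    by_contra h
    push_neg at h
    have hz : Fp xp = 0 := by
      show |w xp| ^ Γ * (max (z xp) 0) ^ β = 0
      rw [max_eq_right h, Real.zero_rpow hβ.ne', mul_zero]
    rw [hMeqp, hz] at hM0; exact lt_irrefl 0 hM0
  have hzxm : 0 < -z xm := by
    by_contra h
    push_neg at h
    have hz : Fm xm = 0 := by
      show |w xm| ^ Γ * (max (-z xm) 0) ^ β = 0
      rw [max_eq_right h, Real.zero_rpow hβ.ne', mul_zero]
    rw [hMeqm, hz] at hM0; exact lt_irrefl 0 hM0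
  set L := bestLip w K with hL_def
  set V := bestLip z K with hV_def
  have hL0 : 0 ≤ L := bestLip_nonneg _ _
  have hV0 : 0 ≤ V := bestLip_nonneg _ _
  -- distance-to-boundary bound for w
  set i0 : Fin N := ⟨0, hN⟩
  set e : EuclideanSpace ℝ (Fin N) := EuclideanSpace.single i0 1 with he_def
  have he : ‖e‖ = 1 := by simp [he_def]
  have hwd : ∀ x ∈ K, |w x| ≤ L * (R - ‖x‖) := by
    intro x hx
    rw [hK_def, mem_closedBall_zero_iff] at hx
    have key : ∀ y : EuclideanSpace ℝ (Fin N), ‖y‖ = R → dist x y = R - ‖x‖ →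
        |w x| ≤ L * (R - ‖x‖) := by
      intro y hy hdxy
      have hyK : y ∈ K := by rw [hK_def, mem_closedBall_zero_iff, hy]
      have hwy : w y = 0 := hbd y (by rwa [mem_sphere_zero_iff_norm])
      have hsp := bestLip_spec hwL
        (show x ∈ K by rw [hK_def, mem_closedBall_zero_iff]; exact hx) hyK
      rwa [hwy, sub_zero, hdxy] at hsp
    rcases eq_or_ne x 0 with rfl | hx0'
    · refine key (R • e) ?_ ?_
      · rw [norm_smul, he, mul_one, Real.norm_eq_abs]; exact abs_of_pos hR
      · rw [dist_zero_left, norm_smul, he, mul_one, Real.norm_eq_abs, norm_zero, sub_zero]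
        exact abs_of_pos hR
    · have hxn : 0 < ‖x‖ := norm_pos_iff.mpr hx0'
      refine key ((R / ‖x‖) • x) ?_ ?_
      · rw [norm_smul, Real.norm_eq_abs, abs_of_pos (div_pos hR hxn), div_mul_cancel₀ _ hxn.ne']
      · rw [dist_eq_norm]
        have hxx : x - (R / ‖x‖) • x = (1 - R / ‖x‖) • x := by rw [sub_smul, one_smul]
        have h1' : (1:ℝ) ≤ R / ‖x‖ := (one_le_div hxn).mpr hx
        rw [hxx, norm_smul, Real.norm_eq_abs, abs_of_nonpos (by linarith : (1:ℝ) - R / ‖x‖ ≤ 0)]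
        field_simp; ring
  set a := z xp with ha_def
  set b := -z xm with hb_def
  set dp := R - ‖xp‖ with hdp_def
  set dm := R - ‖xm‖ with hdm_def
  have hxpK' := hxpK
  have hxmK' := hxmK
  rw [hK_def, mem_closedBall_zero_iff] at hxpK' hxmK'
  have hdp0 : 0 ≤ dp := by rw [hdp_def]; linarith
  have hdm0 : 0 ≤ dm := by rw [hdm_def]; linarith
  have ha : 0 < a := hzxp
  have hb : 0 < b := hzxm
  have h1 : M ≤ (L * dp) ^ Γ * a ^ β := by
    rw [hMeqp]
    show |w xp| ^ Γ * (max (z xp) 0) ^ β ≤ _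
    rw [max_eq_left hzxp.le]
    exact mul_le_mul_of_nonneg_right
      (Real.rpow_le_rpow (abs_nonneg _) (hwd xp hxpK) hΓ0.le)
      (Real.rpow_nonneg hzxp.le β)
  have h2 : M ≤ (L * dm) ^ Γ * b ^ β := by
    rw [hMeqm]
    show |w xm| ^ Γ * (max (-z xm) 0) ^ β ≤ _
    rw [max_eq_left hzxm.le]
    exact mul_le_mul_of_nonneg_right
      (Real.rpow_le_rpow (abs_nonneg _) (hwd xm hxmK) hΓ0.le)
      (Real.rpow_nonneg hzxm.le β)
  have h3 : a + b ≤ V * (2 * R - dp - dm) := by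
    have hsp := bestLip_spec hzL hxpK hxmK
    have h4 : a + b ≤ V * dist xp xm := by
      have hab : a + b = z xp - z xm := by rw [ha_def, hb_def]; ring
      rw [hab]
      exact le_trans (le_abs_self _) hsp
    have h5 : dist xp xm ≤ 2 * R - dp - dm := by
      rw [dist_eq_norm, hdp_def, hdm_def]
      have := norm_sub_le xp xm
      linarith
    exact le_trans h4 (mul_le_mul_of_nonneg_left h5 hV0)
  have hL : 0 < L := by
    rcases hL0.lt_or_eq with h | h
    · exact h
    · exfalso
      rw [← h, zero_mul, Real.zero_rpow hΓ0.ne', zero_mul] at h1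
      linarith
  have hV : 0 < V := by
    rcases hV0.lt_or_eq with h | h
    · exact h
    · exfalso; rw [← h, zero_mul] at h3; linarith
  set D := (dp + dm) / 2 with hD_def
  set C := (a + b) / 2 with hC_def
  have hD0 : 0 ≤ D := by rw [hD_def]; linarith
  have hC0 : 0 < C := by rw [hC_def]; linarith
  have h3' : C ≤ V * (R - D) := by
    have hVr : V * (2 * R - dp - dm) = 2 * (V * (R - D)) := by rw [hD_def]; ring
    rw [hC_def]
    linarith [h3, hVr]
  have hDC : D + C / V ≤ R := by
    have hCV : C / V ≤ R - D := by rw [div_le_iff₀ hV, mul_comm]; exact h3'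
    linarith
  have hX0 : 0 ≤ (L * D) ^ Γ * C ^ β :=
    mul_nonneg (Real.rpow_nonneg (mul_nonneg hL0 hD0) _) (Real.rpow_nonneg hC0.le _)
  have hMX : M ≤ (L * D) ^ Γ * C ^ β := by
    have idp : dp * dm ≤ D * D := by rw [hD_def]; exact amq_aux
    have iab : a * b ≤ C * C := by rw [hC_def]; exact amq_aux
    have i1 : (L * dp) * (L * dm) ≤ (L * D) * (L * D) := aux_i1 hL0 idp
    have e1 : (L * dp) ^ Γ * a ^ β * ((L * dm) ^ Γ * b ^ β)
        = ((L * dp) * (L * dm)) ^ Γ * (a * b) ^ β := by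
      rw [Real.mul_rpow (mul_nonneg hL0 hdp0) (mul_nonneg hL0 hdm0),
        Real.mul_rpow ha.le hb.le]
      ring
    have e2 : ((L * D) ^ Γ * C ^ β) * ((L * D) ^ Γ * C ^ β)
        = ((L * D) * (L * D)) ^ Γ * (C * C) ^ β := by
      rw [Real.mul_rpow (mul_nonneg hL0 hD0) (mul_nonneg hL0 hD0),
        Real.mul_rpow hC0.le hC0.le]
      ring
    have hsq : M * M ≤ ((L * D) ^ Γ * C ^ β) * ((L * D) ^ Γ * C ^ β) := by
      calc M * M ≤ ((L * dp) ^ Γ * a ^ β) * ((L * dm) ^ Γ * b ^ β) :=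
        mul_le_mul h1 h2 hM0.le (le_trans hM0.le h1)
      _ = ((L * dp) * (L * dm)) ^ Γ * (a * b) ^ β := e1
      _ ≤ ((L * D) * (L * D)) ^ Γ * (C * C) ^ β := by
          refine mul_le_mul (Real.rpow_le_rpow ?_ i1 hΓ0.le)
            (Real.rpow_le_rpow (mul_nonneg ha.le hb.le) iab hβ.le)
            (Real.rpow_nonneg (mul_nonneg ha.le hb.le) _)
            (Real.rpow_nonneg ?_ _)
          · exact mul_nonneg (mul_nonneg hL0 hdp0) (mul_nonneg hL0 hdm0)
          · exact mul_nonneg (mul_nonneg hL0 hD0) (mul_nonneg hL0 hD0)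
      _ = _ := e2.symm
    exact sq_le_imp hM0 hX0 hsq
  have hamgm : D ^ Γ * (C / V) ^ β ≤ m := by
    rw [hmdef, hδdef, hcdef, hsdef]
    exact amgm_aux hΓ0 hβ hR hD0 (div_nonneg hC0.le hV0) hDC
  have hC_eq : V * (C / V) = C := by field_simp
  have hLD : (L * D) ^ Γ * C ^ β = L ^ Γ * V ^ β * (D ^ Γ * (C / V) ^ β) := by
    conv_lhs => rw [Real.mul_rpow hL0 hD0, ← hC_eq,
      Real.mul_rpow hV0 (div_nonneg hC0.le hV0)]
    ring
  have hMle : M ≤ L ^ Γ * V ^ β * m := by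
    rw [hLD] at hMX
    exact le_trans hMX (mul_le_mul_of_nonneg_left hamgm (by positivity))
  set T := max L (V ^ Q) with hT_def
  have hT : 0 < T := lt_of_lt_of_le hL (le_max_left _ _)
  have hVT : V ≤ T ^ (1 / Q) := by
    have h4 : V ^ Q ≤ T := le_max_right _ _
    have h5 := Real.rpow_le_rpow (Real.rpow_nonneg hV0 Q) h4 (by positivity : (0:ℝ) ≤ 1/Q)
    rwa [← Real.rpow_mul hV0, mul_one_div, div_self hQ.ne', Real.rpow_one] at h5
  have hLVT : L ^ Γ * V ^ β ≤ T := by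
    have i2 : L ^ Γ ≤ T ^ Γ := Real.rpow_le_rpow hL0 (le_max_left _ _) hΓ0.le
    have i3 : V ^ β ≤ T ^ (1 / Q * β) := by
      rw [Real.rpow_mul hT.le]
      exact Real.rpow_le_rpow hV0 hVT hβ.le
    have i4 : T ^ Γ * T ^ (1 / Q * β) = T := by
      rw [← Real.rpow_add hT]
      have hone : Γ + 1 / Q * β = 1 := by rw [hβdef]; field_simp; ring
      rw [hone, Real.rpow_one]
    calc L ^ Γ * V ^ β ≤ T ^ Γ * T ^ (1 / Q * β) :=
      mul_le_mul i2 i3 (Real.rpow_nonneg hV0 β) (Real.rpow_nonneg hT.le Γ)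
    _ = T := i4
  have hfinal : M ≤ T * m :=
    le_trans hMle (mul_le_mul_of_nonneg_right hLVT hm.le)
  rw [div_le_div_iff₀ hm hM0, one_mul]
  exact hfinal

/-- The limit eigenvalue on the ball `B_R ⊂ ℝ^N` is
`((Γ+Q(1-Γ))/(ΓR))^Γ ((Γ+Q(1-Γ))/(Q(1-Γ)R))^{(1-Γ)Q}`. -/
theorem lambdaInfty_ball (N : ℕ) (hN : 1 ≤ N) (R Γ Q : ℝ) (hR : 0 < R)
    (hΓ : Γ ∈ Set.Ioo (0 : ℝ) 1) (hQ : 0 < Q) :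
    LambdaInfty Γ Q (Metric.ball (0 : EuclideanSpace ℝ (Fin N)) R) =
      ((Γ + Q * (1 - Γ)) / (Γ * R)) ^ Γ *
        ((Γ + Q * (1 - Γ)) / (Q * (1 - Γ) * R)) ^ ((1 - Γ) * Q) := by
  obtain ⟨hΓ0, hΓ1⟩ := hΓ
  have hβ : 0 < (1 - Γ) * Q := mul_pos (by linarith) hQ
  have hs : 0 < Γ + (1 - Γ) * Q := by positivity
  set m := (Γ * R / (Γ + (1 - Γ) * Q)) ^ Γ *
    ((1 - Γ) * Q * R / (Γ + (1 - Γ) * Q)) ^ ((1 - Γ) * Q) with hmdef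
  have hm : 0 < m := by positivity
  have hRHS : ((Γ + Q * (1 - Γ)) / (Γ * R)) ^ Γ *
      ((Γ + Q * (1 - Γ)) / (Q * (1 - Γ) * R)) ^ ((1 - Γ) * Q) = 1 / m := by
    have e1 : (Γ + Q * (1 - Γ)) / (Γ * R) = (Γ * R / (Γ + (1 - Γ) * Q))⁻¹ := by
      rw [inv_div]; ring
    have e2 : (Γ + Q * (1 - Γ)) / (Q * (1 - Γ) * R)
        = ((1 - Γ) * Q * R / (Γ + (1 - Γ) * Q))⁻¹ := by
      rw [inv_div]; ring
    rw [e1, e2, Real.inv_rpow (by positivity), Real.inv_rpow (by positivity),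
      ← mul_inv, one_div, ← hmdef]
  rw [hRHS]
  simp only [LambdaInfty]
  have hlb : ∀ q ∈ (fun wz =>
      max (bestLip wz.1 (closure (Metric.ball (0 : EuclideanSpace ℝ (Fin N)) R)))
        (bestLip wz.2 (closure (Metric.ball (0 : EuclideanSpace ℝ (Fin N)) R)) ^ Q) /
      sSup ((fun x => |wz.1 x| ^ Γ * |wz.2 x| ^ ((1 - Γ) * Q)) ''
        closure (Metric.ball (0 : EuclideanSpace ℝ (Fin N)) R))) ''
      AdmClass Γ Q (Metric.ball (0 : EuclideanSpace ℝ (Fin N)) R), 1 / m ≤ q := by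
    rintro q ⟨wz, hwz, rfl⟩
    exact lower_bound hN hR hΓ0 hΓ1 hQ hwz
  obtain ⟨wz0, hwz0, hq0⟩ := construction hN hR hΓ0 hΓ1 hQ
  apply le_antisymm
  · exact csInf_le_of_le ⟨1 / m, fun q hq => hlb q hq⟩ ⟨wz0, hwz0, rfl⟩ hq0
  · exact le_csInf ⟨_, ⟨wz0, hwz0, rfl⟩⟩ hlb
end
end

section
/- Let N ≥ 1, R > 0, Γ ∈ (0,1), Q ∈ (0,∞). Set Θ = ((Γ + Q(1−Γ))/(Γ R)) · ((Γ + Q(1−Γ))/(Q(1−Γ) R))^{(1−Γ)Q/Γ}, k₂ = Θ^{Γ/Q}, k₁ = Θ^Γ, and define on the closed ball cl(B_R) ⊂ ℝ^N the cone w(x) = k₁(R − ‖x‖) and the linear function z(x) = k₂ x₁ (x₁ the first coordinate of x). Then: (i) w and z are Lipschitz on cl(B_R) with best Lipschitz constants Lip(w) = k₁ and Lip(z) = k₂; (ii) w vanishes on the sphere {‖x‖ = R}; (iii) max_{cl(B_R)} |w|^Γ |z|^{(1−Γ)Q} = 1; (iv) max_{cl(B_R)} |w|^Γ (z⁺)^{(1−Γ)Q}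 = max_{cl(B_R)} |w|^Γ (z⁻)^{(1−Γ)Q}; and (v) max{Lip(w), Lip(z)^Q} = Θ^Γ = ((Γ + Q(1−Γ))/(Γ R))^Γ · ((Γ + Q(1−Γ))/(Q(1−Γ) R))^{(1−Γ)Q}. In particular the pair (w,z) belongs to A_∞(B_R) and Λ_∞(Γ,Q;B_R) ≤ Θ^Γ. -/
open Real Set Filter

noncomputable section

lemma coord_abs_le_norm {N : ℕ} (x : EuclideanSpace ℝ (Fin N)) (i : Fin N) : |x i| ≤ ‖x‖ := by
  rw [EuclideanSpace.norm_eq, ← Real.sqrt_sq (abs_nonneg (x i))]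
  apply Real.sqrt_le_sqrt
  rw [sq_abs]
  calc x i ^ 2 = ‖x i‖ ^ 2 := by rw [Real.norm_eq_abs, sq_abs]
  _ ≤ _ := Finset.single_le_sum (f := fun j => ‖x j‖ ^ 2) (fun j _ => by positivity)
      (Finset.mem_univ i)

/-- The explicit extremal pair on the ball: the cone `w(x) = k₁(R - ‖x‖)` and the linear
function `z(x) = k₂ x₁` are admissible and realize the value
`((Γ+Q(1-Γ))/(ΓR))^Γ ((Γ+Q(1-Γ))/(Q(1-Γ)R))^{(1-Γ)Q}`, so that
`Λ_∞(Γ,Q;B_R) ≤ Θ^Γ`. -/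
theorem extremal_pair_ball (N : ℕ) (hN : 1 ≤ N) (R Γ Q : ℝ) (hR : 0 < R)
    (hΓ : Γ ∈ Set.Ioo (0 : ℝ) 1) (hQ : 0 < Q)
    (Θ k₁ k₂ : ℝ)
    (hΘ : Θ = ((Γ + Q * (1 - Γ)) / (Γ * R)) *
      ((Γ + Q * (1 - Γ)) / (Q * (1 - Γ) * R)) ^ ((1 - Γ) * Q / Γ))
    (hk₂ : k₂ = Θ ^ (Γ / Q)) (hk₁ : k₁ = Θ ^ Γ)
    (w z : EuclideanSpace ℝ (Fin N) → ℝ)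
    (hw : w = fun x => k₁ * (R - ‖x‖))
    (hz : z = fun x => k₂ * x ⟨0, hN⟩) :
    -- (i) `w` and `z` are Lipschitz on `cl(B_R)` with best Lipschitz constants `k₁`, `k₂`
    IsLipschitzOnSet w (closure (Metric.ball (0 : EuclideanSpace ℝ (Fin N)) R)) ∧
    IsLipschitzOnSet z (closure (Metric.ball (0 : EuclideanSpace ℝ (Fin N)) R)) ∧
    bestLip w (closure (Metric.ball (0 : EuclideanSpace ℝ (Fin N)) R)) = k₁ ∧
    bestLip z (closure (Metric.ball (0 : EuclideanSpace ℝ (Fin N)) R)) = k₂ ∧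
    -- (ii) `w` vanishes on the sphere `{‖x‖ = R}`
    (∀ x : EuclideanSpace ℝ (Fin N), ‖x‖ = R → w x = 0) ∧
    -- (iii) `max_{cl(B_R)} |w|^Γ |z|^{(1-Γ)Q} = 1`
    sSup ((fun x => |w x| ^ Γ * |z x| ^ ((1 - Γ) * Q)) ''
      closure (Metric.ball (0 : EuclideanSpace ℝ (Fin N)) R)) = 1 ∧
    -- (iv) the positive and negative parts balance
    sSup ((fun x => |w x| ^ Γ * (max (z x) 0) ^ ((1 - Γ) * Q)) ''
      closure (Metric.ball (0 : EuclideanSpace ℝ (Fin N)) R)) =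
      sSup ((fun x => |w x| ^ Γ * (max (-z x) 0) ^ ((1 - Γ) * Q)) ''
        closure (Metric.ball (0 : EuclideanSpace ℝ (Fin N)) R)) ∧
    -- (v) `max{Lip(w), Lip(z)^Q} = Θ^Γ` equals the explicit value
    max k₁ (k₂ ^ Q) = Θ ^ Γ ∧
    Θ ^ Γ = ((Γ + Q * (1 - Γ)) / (Γ * R)) ^ Γ *
      ((Γ + Q * (1 - Γ)) / (Q * (1 - Γ) * R)) ^ ((1 - Γ) * Q) ∧
    -- in particular `(w,z) ∈ A_∞(B_R)` and `Λ_∞(Γ,Q;B_R) ≤ Θ^Γ`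
    (w, z) ∈ AdmClass Γ Q (Metric.ball (0 : EuclideanSpace ℝ (Fin N)) R) ∧
    LambdaInfty Γ Q (Metric.ball (0 : EuclideanSpace ℝ (Fin N)) R) ≤ Θ ^ Γ := by
  obtain ⟨hΓ0, hΓ1⟩ := hΓ
  have h1Γ : (0:ℝ) < 1 - Γ := by linarith
  have hQ' : Q ≠ 0 := hQ.ne'
  have hΓ' : Γ ≠ 0 := hΓ0.ne'
  have hR' : R ≠ 0 := hR.ne'
  set i : Fin N := ⟨0, hN⟩ with hi
  set b : ℝ := (1 - Γ) * Q with hb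
  have hb0 : (0:ℝ) < b := mul_pos h1Γ hQ
  have hΓb : (0:ℝ) < Γ + b := by linarith
  set A : ℝ := (Γ + Q * (1 - Γ)) / (Γ * R) with hA
  set B : ℝ := (Γ + Q * (1 - Γ)) / (Q * (1 - Γ) * R) with hB
  have hS0 : (0:ℝ) < Γ + Q * (1 - Γ) := by nlinarith
  have hA0 : 0 < A := div_pos hS0 (by positivity)
  have hB0 : 0 < B := div_pos hS0 (by positivity)
  have hΘ0 : 0 < Θ := by rw [hΘ]; positivity
  have hk₁0 : 0 < k₁ := hk₁ ▸ Real.rpow_pos_of_pos hΘ0 Γ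
  have hk₂0 : 0 < k₂ := hk₂ ▸ Real.rpow_pos_of_pos hΘ0 _
  have hk₂Q : k₂ ^ Q = k₁ := by
    rw [hk₂, hk₁, ← Real.rpow_mul hΘ0.le, div_mul_cancel₀ _ hQ']
  have hΘΓ : Θ ^ Γ = A ^ Γ * B ^ b := by
    rw [hΘ, Real.mul_rpow hA0.le (Real.rpow_nonneg hB0.le _), ← Real.rpow_mul hB0.le,
      div_mul_cancel₀ _ hΓ']
  have hkk : k₁ ^ Γ * k₂ ^ b = Θ ^ Γ := by
    rw [hk₁, hk₂, ← Real.rpow_mul hΘ0.le, ← Real.rpow_mul hΘ0.le, ← Real.rpow_add hΘ0]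
    congr 1
    rw [hb]; field_simp; ring
  have hcl : closure (Metric.ball (0 : EuclideanSpace ℝ (Fin N)) R)
      = Metric.closedBall 0 R := closure_ball 0 hR'
  -- the maximizing parameter
  set t : ℝ := R * b / (Γ + b) with htdef
  have ht0 : 0 < t := by positivity
  have htR : t < R := by
    rw [htdef, div_lt_iff₀ hΓb]
    nlinarith
  have hRt : A * (R - t) = 1 := by
    rw [hA, htdef, hb]; field_simp; ring
  have hBt : B * t = 1 := by
    rw [hB, htdef, hb]; field_simp
  -- core AM-GM bound
  have hcore : ∀ u : ℝ, 0 ≤ u → u ≤ R → (A * (R - u)) ^ Γ * (B * u) ^ b ≤ 1 := by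
    intro u hu0 huR
    have hp₁ : 0 ≤ A * (R - u) := mul_nonneg hA0.le (by linarith)
    have hp₂ : 0 ≤ B * u := mul_nonneg hB0.le hu0
    have hwsum : Γ / (Γ + b) + b / (Γ + b) = 1 := by
      rw [← add_div, div_self hΓb.ne']
    have key := Real.geom_mean_le_arith_mean2_weighted
      (div_nonneg hΓ0.le hΓb.le) (div_nonneg hb0.le hΓb.le) hp₁ hp₂ hwsum
    have harith : Γ / (Γ + b) * (A * (R - u)) + b / (Γ + b) * (B * u) = 1 := by
      rw [hA, hB, hb]; field_simp; ring
    rw [harith] at key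
    have key2 := Real.rpow_le_one (by positivity) key hΓb.le
    rwa [Real.mul_rpow (Real.rpow_nonneg hp₁ _) (Real.rpow_nonneg hp₂ _),
      ← Real.rpow_mul hp₁, ← Real.rpow_mul hp₂, div_mul_cancel₀ _ hΓb.ne',
      div_mul_cancel₀ _ hΓb.ne'] at key2
  -- rewriting the value of the pair
  have hkey : ∀ u : ℝ, 0 ≤ u → u ≤ R →
      (k₁ * (R - u)) ^ Γ * (k₂ * u) ^ b = (A * (R - u)) ^ Γ * (B * u) ^ b := by
    intro u h0 hR2
    rw [Real.mul_rpow hk₁0.le (by linarith), Real.mul_rpow hk₂0.le h0,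
      Real.mul_rpow hA0.le (by linarith), Real.mul_rpow hB0.le h0]
    linear_combination ((R - u) ^ Γ * u ^ b) * (hkk.trans hΘΓ)
  -- absolute values of w and z
  have hwabs : ∀ x : EuclideanSpace ℝ (Fin N), ‖x‖ ≤ R → |w x| = k₁ * (R - ‖x‖) := by
    intro x hx
    rw [hw]
    exact abs_of_nonneg (mul_nonneg hk₁0.le (by linarith))
  have hzabs : ∀ x : EuclideanSpace ℝ (Fin N), |z x| = k₂ * |x i| := by
    intro x
    rw [hz, abs_mul, abs_of_pos hk₂0]
  -- pointwise bound for (iii)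
  have hFle : ∀ x ∈ Metric.closedBall (0 : EuclideanSpace ℝ (Fin N)) R,
      |w x| ^ Γ * |z x| ^ b ≤ 1 := by
    intro x hx
    rw [Metric.mem_closedBall, dist_zero_right] at hx
    have hs : |x i| ≤ ‖x‖ := coord_abs_le_norm x i
    have hs0 : 0 ≤ |x i| := abs_nonneg _
    have hsR : |x i| ≤ R := hs.trans hx
    rw [hwabs x hx, hzabs x]
    calc (k₁ * (R - ‖x‖)) ^ Γ * (k₂ * |x i|) ^ b
        ≤ (k₁ * (R - |x i|)) ^ Γ * (k₂ * |x i|) ^ b := by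
          apply mul_le_mul_of_nonneg_right _ (Real.rpow_nonneg (by positivity) _)
          exact Real.rpow_le_rpow (mul_nonneg hk₁0.le (by linarith))
            (by nlinarith) hΓ0.le
      _ = (A * (R - |x i|)) ^ Γ * (B * |x i|) ^ b := hkey _ hs0 hsR
      _ ≤ 1 := hcore _ hs0 hsR
  -- the maximizing points
  set xp : EuclideanSpace ℝ (Fin N) := EuclideanSpace.single i t with hxp
  set xm : EuclideanSpace ℝ (Fin N) := EuclideanSpace.single i (-t) with hxm
  have hxpnorm : ‖xp‖ = t := by rw [hxp, EuclideanSpace.norm_single, Real.norm_eq_abs, abs_of_pos ht0]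
  have hxmnorm : ‖xm‖ = t := by rw [hxm, EuclideanSpace.norm_single, Real.norm_eq_abs, abs_neg, abs_of_pos ht0]
  have hxpmem : xp ∈ Metric.closedBall (0 : EuclideanSpace ℝ (Fin N)) R := by
    rw [Metric.mem_closedBall, dist_zero_right, hxpnorm]; exact htR.le
  have hxmmem : xm ∈ Metric.closedBall (0 : EuclideanSpace ℝ (Fin N)) R := by
    rw [Metric.mem_closedBall, dist_zero_right, hxmnorm]; exact htR.le
  have hwxp : w xp = k₁ * (R - t) := by rw [hw]; simp [hxpnorm]
  have hwxm : w xm = k₁ * (R - t) := by rw [hw]; simp [hxmnorm]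
  have hzxp : z xp = k₂ * t := by rw [hz, hxp]; simp
  have hzxm : z xm = k₂ * (-t) := by rw [hz, hxm]; simp
  have hone : (k₁ * (R - t)) ^ Γ * (k₂ * t) ^ b = 1 := by
    rw [hkey t ht0.le htR.le, hRt, hBt, Real.one_rpow, Real.one_rpow, mul_one]
  have hwxpabs : |w xp| = k₁ * (R - t) := by
    rw [hwxp]; exact abs_of_nonneg (mul_nonneg hk₁0.le (by linarith))
  have hwxmabs : |w xm| = k₁ * (R - t) := by
    rw [hwxm]; exact abs_of_nonneg (mul_nonneg hk₁0.le (by linarith))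
  have hzxpabs : |z xp| = k₂ * t := by
    rw [hzxp]; exact abs_of_pos (mul_pos hk₂0 ht0)
  have hsup1 : sSup ((fun x => |w x| ^ Γ * |z x| ^ b) ''
      closure (Metric.ball (0 : EuclideanSpace ℝ (Fin N)) R)) = 1 := by
    rw [hcl]
    apply le_antisymm
    · exact Real.sSup_le (by rintro y ⟨x, hx, rfl⟩; exact hFle x hx) zero_le_one
    · apply le_csSup ⟨1, by rintro y ⟨x, hx, rfl⟩; exact hFle x hx⟩
      exact ⟨xp, hxpmem, by show |w xp| ^ Γ * |z xp| ^ b = 1; rw [hwxpabs, hzxpabs]; exact hone⟩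
  have hFple : ∀ x ∈ Metric.closedBall (0 : EuclideanSpace ℝ (Fin N)) R,
      |w x| ^ Γ * (max (z x) 0) ^ b ≤ 1 := by
    intro x hx
    refine le_trans ?_ (hFle x hx)
    apply mul_le_mul_of_nonneg_left _ (Real.rpow_nonneg (abs_nonneg _) _)
    exact Real.rpow_le_rpow (le_max_right _ _) (max_le (le_abs_self _) (abs_nonneg _)) hb0.le
  have hFmle : ∀ x ∈ Metric.closedBall (0 : EuclideanSpace ℝ (Fin N)) R,
      |w x| ^ Γ * (max (-z x) 0) ^ b ≤ 1 := by
    intro x hx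
    refine le_trans ?_ (hFle x hx)
    apply mul_le_mul_of_nonneg_left _ (Real.rpow_nonneg (abs_nonneg _) _)
    exact Real.rpow_le_rpow (le_max_right _ _) (max_le (neg_le_abs _) (abs_nonneg _)) hb0.le
  have hsupp : sSup ((fun x => |w x| ^ Γ * (max (z x) 0) ^ b) ''
      closure (Metric.ball (0 : EuclideanSpace ℝ (Fin N)) R)) = 1 := by
    rw [hcl]
    apply le_antisymm
    · exact Real.sSup_le (by rintro y ⟨x, hx, rfl⟩; exact hFple x hx) zero_le_one
    · apply le_csSup ⟨1, by rintro y ⟨x, hx, rfl⟩; exact hFple x hx⟩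
      refine ⟨xp, hxpmem, ?_⟩
      show |w xp| ^ Γ * (max (z xp) 0) ^ b = 1
      have hmax : max (z xp) 0 = k₂ * t := by
        rw [hzxp]; exact max_eq_left (by positivity)
      rw [hwxpabs, hmax]; exact hone
  have hsupm : sSup ((fun x => |w x| ^ Γ * (max (-z x) 0) ^ b) ''
      closure (Metric.ball (0 : EuclideanSpace ℝ (Fin N)) R)) = 1 := by
    rw [hcl]
    apply le_antisymm
    · exact Real.sSup_le (by rintro y ⟨x, hx, rfl⟩; exact hFmle x hx) zero_le_one
    · apply le_csSup ⟨1, by rintro y ⟨x, hx, rfl⟩; exact hFmle x hx⟩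
      refine ⟨xm, hxmmem, ?_⟩
      show |w xm| ^ Γ * (max (-z xm) 0) ^ b = 1
      have hmax : max (-z xm) 0 = k₂ * t := by
        rw [hzxm, mul_neg, neg_neg]; exact max_eq_left (by positivity)
      rw [hwxmabs, hmax]; exact hone
    -- Lipschitz bounds
  have hwlip : ∀ x y : EuclideanSpace ℝ (Fin N), |w x - w y| ≤ k₁ * dist x y := by
    intro x y
    rw [hw]
    simp only
    have e : k₁ * (R - ‖x‖) - k₁ * (R - ‖y‖) = k₁ * (‖y‖ - ‖x‖) := by ring
    rw [e, abs_mul, abs_of_pos hk₁0]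
    apply mul_le_mul_of_nonneg_left _ hk₁0.le
    rw [dist_eq_norm]
    calc |‖y‖ - ‖x‖| ≤ ‖y - x‖ := abs_norm_sub_norm_le y x
      _ = ‖x - y‖ := norm_sub_rev y x
  have hzlip : ∀ x y : EuclideanSpace ℝ (Fin N), |z x - z y| ≤ k₂ * dist x y := by
    intro x y
    rw [hz]
    simp only
    have e : k₂ * x i - k₂ * y i = k₂ * (x i - y i) := by ring
    rw [e, abs_mul, abs_of_pos hk₂0]
    apply mul_le_mul_of_nonneg_left _ hk₂0.le
    rw [dist_eq_norm]
    simpa using coord_abs_le_norm (x - y) i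
  have hwLipOn : IsLipschitzOnSet w
      (closure (Metric.ball (0 : EuclideanSpace ℝ (Fin N)) R)) := by
    refine ⟨⟨k₁, hk₁0.le⟩, ?_⟩
    apply LipschitzOnWith.of_dist_le_mul
    intro x _ y _
    rw [Real.dist_eq]
    exact hwlip x y
  have hzLipOn : IsLipschitzOnSet z
      (closure (Metric.ball (0 : EuclideanSpace ℝ (Fin N)) R)) := by
    refine ⟨⟨k₂, hk₂0.le⟩, ?_⟩
    apply LipschitzOnWith.of_dist_le_mul
    intro x _ y _
    rw [Real.dist_eq]
    exact hzlip x y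
  -- boundary test point
  have hRe : (EuclideanSpace.single i R : EuclideanSpace ℝ (Fin N))
      ∈ Metric.closedBall (0 : EuclideanSpace ℝ (Fin N)) R := by
    rw [Metric.mem_closedBall, dist_zero_right, EuclideanSpace.norm_single,
      Real.norm_eq_abs, abs_of_pos hR]
  have h0mem : (0 : EuclideanSpace ℝ (Fin N))
      ∈ Metric.closedBall (0 : EuclideanSpace ℝ (Fin N)) R :=
    Metric.mem_closedBall_self hR.le
  have hdistR : dist (EuclideanSpace.single i R : EuclideanSpace ℝ (Fin N))
      (0 : EuclideanSpace ℝ (Fin N)) = R := by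
    rw [dist_zero_right, EuclideanSpace.norm_single, Real.norm_eq_abs, abs_of_pos hR]
  have hbestw : bestLip w (closure (Metric.ball (0 : EuclideanSpace ℝ (Fin N)) R)) = k₁ := by
    rw [bestLip, hcl]
    apply le_antisymm
    · exact csInf_le ⟨0, fun K hK => hK.1⟩ ⟨hk₁0.le, fun x _ y _ => hwlip x y⟩
    · apply le_csInf
      · exact ⟨k₁, hk₁0.le, fun x _ y _ => hwlip x y⟩
      rintro K ⟨hK0, hK⟩
      have hKK := hK _ hRe _ h0mem
      have e1 : w (EuclideanSpace.single i R) = 0 := by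
        rw [hw]
        simp [EuclideanSpace.norm_single, abs_of_pos hR]
      have e2 : w 0 = k₁ * R := by rw [hw]; simp
      rw [e1, e2, hdistR, zero_sub, abs_neg, abs_of_pos (by positivity)] at hKK
      exact le_of_mul_le_mul_right hKK hR
  have hbestz : bestLip z (closure (Metric.ball (0 : EuclideanSpace ℝ (Fin N)) R)) = k₂ := by
    rw [bestLip, hcl]
    apply le_antisymm
    · exact csInf_le ⟨0, fun K hK => hK.1⟩ ⟨hk₂0.le, fun x _ y _ => hzlip x y⟩
    · apply le_csInf
      · exact ⟨k₂, hk₂0.le, fun x _ y _ => hzlip x y⟩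
      rintro K ⟨hK0, hK⟩
      have hKK := hK _ hRe _ h0mem
      have e1 : z (EuclideanSpace.single i R) = k₂ * R := by
        rw [hz]; simp
      have e2 : z 0 = 0 := by rw [hz]; simp
      rw [e1, e2, hdistR, sub_zero, abs_of_pos (by positivity)] at hKK
      exact le_of_mul_le_mul_right hKK hR
  -- boundary vanishing
  have hsphere : ∀ x : EuclideanSpace ℝ (Fin N), ‖x‖ = R → w x = 0 := by
    intro x hx
    rw [hw]
    simp [hx]
  have hfront : ∀ x ∈ frontier (Metric.ball (0 : EuclideanSpace ℝ (Fin N)) R), w x = 0 := by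
    intro x hx
    rw [frontier_ball 0 hR'] at hx
    exact hsphere x (by rwa [Metric.mem_sphere, dist_zero_right] at hx)
  -- admissibility
  have hAdm : (w, z) ∈ AdmClass Γ Q (Metric.ball (0 : EuclideanSpace ℝ (Fin N)) R) := by
    refine ⟨hwLipOn, hzLipOn, hfront, ⟨xp, ?_, ?_⟩, hsupp.trans hsupm.symm⟩
    · rw [hcl]; exact hxpmem
    · show w xp * z xp ≠ 0
      rw [hwxp, hzxp]
      have : 0 < k₁ * (R - t) * (k₂ * t) := by
        apply mul_pos (mul_pos hk₁0 (by linarith)) (mul_pos hk₂0 ht0)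
      exact this.ne'
  -- the value of the pair and the upper bound for Λ_∞
  have hmaxk : max k₁ (k₂ ^ Q) = Θ ^ Γ := by rw [hk₂Q, max_self]; exact hk₁
  have hLam : LambdaInfty Γ Q (Metric.ball (0 : EuclideanSpace ℝ (Fin N)) R) ≤ Θ ^ Γ := by
    unfold LambdaInfty
    apply csInf_le
    · refine ⟨0, ?_⟩
      rintro y ⟨wz, -, rfl⟩
      apply div_nonneg
      · exact le_trans (Real.sInf_nonneg (fun K hK => hK.1)) (le_max_left _ _)
      · exact Real.sSup_nonneg (by rintro v ⟨x, -, rfl⟩; positivity)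
    · refine ⟨(w, z), hAdm, ?_⟩
      show max (bestLip w _) (bestLip z _ ^ Q) / sSup _ = Θ ^ Γ
      rw [hbestw, hbestz, hsup1, div_one, hmaxk]
  exact ⟨hwLipOn, hzLipOn, hbestw, hbestz, hsphere, hsup1, hsupp.trans hsupm.symm,
    hmaxk, hΘΓ, hAdm, hLam⟩
end
end

section
/- Let (X, μ) be a measure space with μ finite, and let g, h : X → ℝ be measurable functions that are essentially bounded with respect to μ. Let (p_n) and (q_n) be sequences of real numbers with p_n → ∞ and q_n/p_n → Q for some Q ∈ (0,∞). Then ((1/p_n) ∫_X |g|^{p_n} dμ + (1/q_n) ∫_X |h|^{q_n} dμ)^{1/p_n} → max{‖g‖_{L^∞(μ)}, ‖h‖_{L^∞(μ)}^Q} as n → ∞. -/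
open Real Set Filter MeasureTheory
open scoped ENNReal NNReal

section helpers
variable {X : Type*} [MeasurableSpace X] {μ : Measure X}

private lemma my_logdiv : Tendsto (fun x : ℝ => Real.log x / x) atTop (nhds 0) := by
  simpa using Real.tendsto_pow_log_div_mul_add_atTop 1 0 1 one_ne_zero

private lemma my_aux2 {p : ℕ → ℝ} (hp : Tendsto p atTop atTop) (k : ℝ) (hk : 0 < k) :
    Tendsto (fun n => k ^ (1 / p n)) atTop (nhds 1) := by
  have h1 : Tendsto (fun n => Real.log k * (1 / p n)) atTop (nhds 0) := by
    have := (tendsto_const_nhds (x := Real.log k)).mul hp.inv_tendsto_atTop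
    simpa [one_div, Function.comp] using this
  have h2 := (Real.continuous_exp.tendsto 0).comp h1
  rw [Real.exp_zero] at h2
  exact h2.congr fun n => (Real.rpow_def_of_pos hk _).symm

private lemma my_aux1 {p s : ℕ → ℝ} (hp : Tendsto p atTop atTop)
    (hs : Tendsto s atTop atTop)
    (hls : Tendsto (fun n => Real.log (s n) / p n) atTop (nhds 0))
    (m : ℝ) (hm : 0 < m) :
    Tendsto (fun n => (m / s n) ^ (1 / p n)) atTop (nhds 1) := by
  have h0 : Tendsto (fun n => Real.log m / p n) atTop (nhds 0) := by
    simpa [div_eq_mul_inv] using (tendsto_const_nhds (x := Real.log m)).mul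
      (hp.inv_tendsto_atTop)
  have h1 : Tendsto (fun n => (Real.log m - Real.log (s n)) / p n) atTop (nhds 0) := by
    have := h0.sub hls
    simpa [sub_div] using this
  have h2 := (Real.continuous_exp.tendsto 0).comp h1
  rw [Real.exp_zero] at h2
  apply h2.congr'
  filter_upwards [hp.eventually_gt_atTop 0, hs.eventually_gt_atTop 0] with n hpn hsn
  rw [Real.rpow_def_of_pos (by positivity), Real.log_div hm.ne' hsn.ne']
  simp only [Function.comp_apply]
  rw [mul_one_div]

private lemma my_ae_abs_le {f : X → ℝ} (hf : MemLp f ⊤ μ) :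
    ∀ᵐ x ∂μ, |f x| ≤ (eLpNorm f ⊤ μ).toReal := by
  have h := enorm_ae_le_eLpNormEssSup f μ
  have hfin : eLpNormEssSup f μ ≠ ⊤ := by
    rw [← eLpNorm_exponent_top]; exact hf.eLpNorm_ne_top
  filter_upwards [h] with x hx
  rw [eLpNorm_exponent_top]
  calc |f x| = ((‖f x‖₊ : ℝ≥0∞)).toReal := by simp [Real.norm_eq_abs]
  _ ≤ (eLpNormEssSup f μ).toReal := ENNReal.toReal_mono hfin hx

private lemma my_integrable_abs_rpow [IsFiniteMeasure μ] {f : X → ℝ} (hfm : Measurable f)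
    (hf : MemLp f ⊤ μ) {r : ℝ} (hr : 0 ≤ r) :
    Integrable (fun x => |f x| ^ r) μ := by
  rw [← memLp_one_iff_integrable]
  refine MemLp.of_bound ((hfm.abs.pow measurable_const).aestronglyMeasurable)
    ((eLpNorm f ⊤ μ).toReal ^ r) ?_
  filter_upwards [my_ae_abs_le hf] with x hx
  rw [Real.norm_eq_abs, abs_of_nonneg (Real.rpow_nonneg (abs_nonneg _) _)]
  exact Real.rpow_le_rpow (abs_nonneg _) hx hr

private lemma my_integral_rpow_le [IsFiniteMeasure μ] {f : X → ℝ} (hfm : Measurable f)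
    (hf : MemLp f ⊤ μ) {r : ℝ} (hr : 0 ≤ r) :
    ∫ x, |f x| ^ r ∂μ ≤ (eLpNorm f ⊤ μ).toReal ^ r * (μ Set.univ).toReal := by
  have := integral_mono_ae (my_integrable_abs_rpow hfm hf hr) (integrable_const _)
    (by filter_upwards [my_ae_abs_le hf] with x hx
        exact Real.rpow_le_rpow (abs_nonneg _) hx hr)
  simpa [mul_comm, smul_eq_mul, Measure.real] using this

private lemma my_meas_pos {f : X → ℝ} (_hf : MemLp f ⊤ μ) {a : ℝ}
    (ha0 : 0 ≤ a) (ha : a < (eLpNorm f ⊤ μ).toReal) :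
    0 < μ {x | a < |f x|} := by
  by_contra hcon
  rw [not_lt, le_zero_iff] at hcon
  have hae : ∀ᵐ x ∂μ, |f x| ≤ a := by
    rw [ae_iff]
    convert hcon using 2
    ext x; simp [not_le]
  have hle : eLpNorm f ⊤ μ ≤ ENNReal.ofReal a := by
    rw [eLpNorm_exponent_top]
    exact eLpNormEssSup_le_of_ae_bound (by simpa [Real.norm_eq_abs] using hae)
  have : (eLpNorm f ⊤ μ).toReal ≤ a := by
    have := ENNReal.toReal_mono ENNReal.ofReal_ne_top hle
    rwa [ENNReal.toReal_ofReal ha0] at this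
  linarith

private lemma my_integral_rpow_ge [IsFiniteMeasure μ] {f : X → ℝ} (hfm : Measurable f)
    (hf : MemLp f ⊤ μ) {a r : ℝ} (ha0 : 0 ≤ a) (hr : 0 ≤ r) :
    a ^ r * (μ {x | a < |f x|}).toReal ≤ ∫ x, |f x| ^ r ∂μ := by
  have hS : MeasurableSet {x | a < |f x|} := measurableSet_lt measurable_const hfm.abs
  have hint := my_integrable_abs_rpow hfm hf hr
  calc a ^ r * (μ {x | a < |f x|}).toReal ≤ ∫ x in {x | a < |f x|}, |f x| ^ r ∂μ := by
        rw [mul_comm]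
        show μ.real {x | a < |f x|} • a ^ r ≤ _
        refine setIntegral_ge_of_const_le hS (measure_ne_top μ _) ?_ hint.integrableOn
        intro x hx
        exact Real.rpow_le_rpow ha0 (le_of_lt hx) hr
  _ ≤ ∫ x, |f x| ^ r ∂μ :=
        setIntegral_le_integral hint (Eventually.of_forall fun x =>
          Real.rpow_nonneg (abs_nonneg _) _)

end helpers

/-- For essentially bounded `g, h` on a finite measure space and `p_n → ∞`,
`q_n / p_n → Q ∈ (0,∞)`, one has
`((1/p_n) ∫ |g|^{p_n} + (1/q_n) ∫ |h|^{q_n})^{1/p_n} → max{‖g‖_∞, ‖h‖_∞^Q}`. -/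
theorem limit_energy_to_max_sup {X : Type*} [MeasurableSpace X]
    (μ : Measure X) [IsFiniteMeasure μ]
    (g h : X → ℝ) (hg : Measurable g) (hh : Measurable h)
    (hgb : MemLp g ⊤ μ) (hhb : MemLp h ⊤ μ)
    (p q : ℕ → ℝ) (Q : ℝ) (hQ : 0 < Q)
    (hp : Tendsto p atTop atTop)
    (hq : Tendsto (fun n => q n / p n) atTop (nhds Q)) :
    Tendsto
      (fun n => ((1 / p n) * ∫ x, |g x| ^ p n ∂μ +
        (1 / q n) * ∫ x, |h x| ^ q n ∂μ) ^ (1 / p n))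
      atTop
      (nhds (max ((eLpNorm g ⊤ μ).toReal) (((eLpNorm h ⊤ μ).toReal) ^ Q))) := by
  have hq' : Tendsto q atTop atTop := by
    refine Tendsto.congr' ?_ (hq.pos_mul_atTop hQ hp)
    filter_upwards [hp.eventually_ne_atTop 0] with n hn
    field_simp
  -- handle the trivial case μ = 0
  rcases eq_or_ne μ 0 with rfl | hμ
  · have hev : (fun n => ((1 / p n) * ∫ x, |g x| ^ p n ∂(0 : Measure X) +
        (1 / q n) * ∫ x, |h x| ^ q n ∂(0 : Measure X)) ^ (1 / p n)) =ᶠ[atTop]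
        fun _ => (0 : ℝ) := by
      filter_upwards [hp.eventually_gt_atTop 0] with n hpn
      rw [integral_zero_measure, integral_zero_measure, mul_zero, mul_zero, add_zero,
        Real.zero_rpow (by positivity : (1:ℝ)/p n ≠ 0)]
    rw [show max ((eLpNorm g ⊤ (0 : Measure X)).toReal)
        (((eLpNorm h ⊤ (0 : Measure X)).toReal) ^ Q) = 0 by
      simp [Real.zero_rpow hQ.ne']]
    exact Tendsto.congr' hev.symm tendsto_const_nhds
  set A := (eLpNorm g ⊤ μ).toReal with hAdef
  set B := (eLpNorm h ⊤ μ).toReal with hBdef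
  have hA0 : 0 ≤ A := ENNReal.toReal_nonneg
  have hB0 : 0 ≤ B := ENNReal.toReal_nonneg
  set c := (μ Set.univ).toReal with hcdef
  have hc : 0 < c := ENNReal.toReal_pos
    (by simpa [Measure.measure_univ_eq_zero] using hμ) (measure_ne_top μ _)
  have hlogp : Tendsto (fun n => Real.log (p n) / p n) atTop (nhds 0) := my_logdiv.comp hp
  have hlogqq : Tendsto (fun n => Real.log (q n) / q n) atTop (nhds 0) := my_logdiv.comp hq'
  have hlogq : Tendsto (fun n => Real.log (q n) / p n) atTop (nhds 0) := by
    have := hlogqq.mul hq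
    rw [zero_mul] at this
    refine Tendsto.congr' ?_ this
    filter_upwards [hq'.eventually_ne_atTop 0] with n hn
    rw [div_mul_div_comm, mul_comm (q n) (p n), mul_div_mul_right _ _ hn]
  have hIg : ∀ n, (0:ℝ) ≤ ∫ x, |g x| ^ p n ∂μ :=
    fun n => integral_nonneg fun x => Real.rpow_nonneg (abs_nonneg _) _
  have hIh : ∀ n, (0:ℝ) ≤ ∫ x, |h x| ^ q n ∂μ :=
    fun n => integral_nonneg fun x => Real.rpow_nonneg (abs_nonneg _) _
  refine tendsto_order.2 ⟨fun b hb => ?_, fun b hb => ?_⟩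
  · -- lower bound
    rcases lt_or_ge b 0 with hb0 | hb0
    · filter_upwards [hp.eventually_ge_atTop 1, hq'.eventually_ge_atTop 1] with n hpn hqn
      have hp0 : (0:ℝ) < p n := lt_of_lt_of_le one_pos hpn
      have hq0 : (0:ℝ) < q n := lt_of_lt_of_le one_pos hqn
      have hT : (0:ℝ) ≤ (1 / p n) * ∫ x, |g x| ^ p n ∂μ +
          (1 / q n) * ∫ x, |h x| ^ q n ∂μ :=
        add_nonneg (mul_nonneg (by positivity) (hIg n))
          (mul_nonneg (by positivity) (hIh n))
      exact lt_of_lt_of_le hb0 (Real.rpow_nonneg hT _)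
    rcases lt_max_iff.1 hb with hbA | hbB
    · -- b < A
      set a := (b + A) / 2 with hadef
      have ha0 : 0 < a := by simp only [hadef]; linarith
      have hba : b < a := by simp only [hadef]; linarith
      have haA : a < A := by simp only [hadef]; linarith
      have hm : 0 < (μ {x | a < |g x|}).toReal :=
        ENNReal.toReal_pos (my_meas_pos hgb ha0.le haA).ne' (measure_ne_top μ _)
      set m := (μ {x | a < |g x|}).toReal with hmdef
      have hLim : Tendsto (fun n => (m / p n) ^ (1 / p n) * a) atTop (nhds a) := by
        simpa using (my_aux1 hp hp hlogp m hm).mul_const a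
      filter_upwards [hLim.eventually (eventually_gt_nhds hba),
        hp.eventually_ge_atTop 1, hq'.eventually_ge_atTop 1] with n hn hpn hqn
      have hp0 : (0:ℝ) < p n := lt_of_lt_of_le one_pos hpn
      have hq0 : (0:ℝ) < q n := lt_of_lt_of_le one_pos hqn
      refine lt_of_lt_of_le hn ?_
      have h1 : (1 / p n) * (a ^ p n * m) ≤ (1 / p n) * ∫ x, |g x| ^ p n ∂μ +
          (1 / q n) * ∫ x, |h x| ^ q n ∂μ := by
        have hg1 : a ^ p n * m ≤ ∫ x, |g x| ^ p n ∂μ :=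
          my_integral_rpow_ge hg hgb ha0.le hp0.le
        have h2 : (0:ℝ) ≤ (1 / q n) * ∫ x, |h x| ^ q n ∂μ :=
          mul_nonneg (by positivity) (hIh n)
        have h3 := mul_le_mul_of_nonneg_left hg1 (by positivity : (0:ℝ) ≤ 1 / p n)
        linarith
      calc (m / p n) ^ (1 / p n) * a = ((1 / p n) * (a ^ p n * m)) ^ (1 / p n) := by
            rw [show (1 / p n) * (a ^ p n * m) = (m / p n) * a ^ p n by ring,
              Real.mul_rpow (by positivity) (Real.rpow_nonneg ha0.le _),
              ← Real.rpow_mul ha0.le, mul_one_div_cancel hp0.ne', Real.rpow_one]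
      _ ≤ _ := Real.rpow_le_rpow
            (mul_nonneg (by positivity) (mul_nonneg (Real.rpow_nonneg ha0.le _) hm.le))
            h1 (by positivity)
    · -- b < B ^ Q
      have hBpos : 0 < B := by
        rcases eq_or_lt_of_le hB0 with hB0' | hB0'
        · exfalso
          rw [← hB0', Real.zero_rpow hQ.ne'] at hbB
          linarith
        · exact hB0'
      set t := (b + B ^ Q) / 2 with htdef
      have ht0 : 0 < t := by
        have : 0 < B ^ Q := Real.rpow_pos_of_pos hBpos _
        simp only [htdef]; linarith
      have hbt : b < t := by simp only [htdef]; linarith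
      have htB : t < B ^ Q := by simp only [htdef]; linarith
      set a := t ^ Q⁻¹ with hadef
      have ha0 : 0 < a := Real.rpow_pos_of_pos ht0 _
      have haB : a < B := by
        have h1 : t ^ Q⁻¹ < (B ^ Q) ^ Q⁻¹ :=
          Real.rpow_lt_rpow ht0.le htB (inv_pos.2 hQ)
        rwa [← Real.rpow_mul hB0, mul_inv_cancel₀ hQ.ne', Real.rpow_one] at h1
      have haQ : a ^ Q = t := by
        rw [hadef, ← Real.rpow_mul ht0.le, inv_mul_cancel₀ hQ.ne', Real.rpow_one]
      have hm : 0 < (μ {x | a < |h x|}).toReal :=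
        ENNReal.toReal_pos (my_meas_pos hhb ha0.le haB).ne' (measure_ne_top μ _)
      set m := (μ {x | a < |h x|}).toReal with hmdef
      have hLim : Tendsto (fun n => (m / q n) ^ (1 / p n) * a ^ (q n / p n))
          atTop (nhds t) := by
        have h1 := my_aux1 hp hq' hlogq m hm
        have h2 : Tendsto (fun n => a ^ (q n / p n)) atTop (nhds (a ^ Q)) :=
          (Real.continuousAt_const_rpow ha0.ne').tendsto.comp hq
        have := h1.mul h2
        rw [one_mul, haQ] at this
        exact this
      filter_upwards [hLim.eventually (eventually_gt_nhds hbt),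
        hp.eventually_ge_atTop 1, hq'.eventually_ge_atTop 1] with n hn hpn hqn
      have hp0 : (0:ℝ) < p n := lt_of_lt_of_le one_pos hpn
      have hq0 : (0:ℝ) < q n := lt_of_lt_of_le one_pos hqn
      refine lt_of_lt_of_le hn ?_
      have h1 : (1 / q n) * (a ^ q n * m) ≤ (1 / p n) * ∫ x, |g x| ^ p n ∂μ +
          (1 / q n) * ∫ x, |h x| ^ q n ∂μ := by
        have hh1 : a ^ q n * m ≤ ∫ x, |h x| ^ q n ∂μ :=
          my_integral_rpow_ge hh hhb ha0.le hq0.le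
        have h2 : (0:ℝ) ≤ (1 / p n) * ∫ x, |g x| ^ p n ∂μ :=
          mul_nonneg (by positivity) (hIg n)
        have h3 := mul_le_mul_of_nonneg_left hh1 (by positivity : (0:ℝ) ≤ 1 / q n)
        linarith
      calc (m / q n) ^ (1 / p n) * a ^ (q n / p n)
          = ((1 / q n) * (a ^ q n * m)) ^ (1 / p n) := by
            rw [show (1 / q n) * (a ^ q n * m) = (m / q n) * a ^ q n by ring,
              Real.mul_rpow (by positivity) (Real.rpow_nonneg ha0.le _),
              ← Real.rpow_mul ha0.le, mul_one_div]
      _ ≤ _ := Real.rpow_le_rpow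
            (mul_nonneg (by positivity) (mul_nonneg (Real.rpow_nonneg ha0.le _) hm.le))
            h1 (by positivity)
  · -- upper bound
    set M := max A (B ^ Q) with hMdef
    have hM0 : 0 ≤ M := le_trans hA0 (le_max_left _ _)
    set d := (M + b) / 2 with hddef
    have hMd : M < d := by simp only [hddef]; linarith
    have hdb : d < b := by simp only [hddef]; linarith
    have hd0 : 0 < d := by simp only [hddef]; linarith
    have hAd : A < d := lt_of_le_of_lt (le_max_left _ _) hMd
    have hBQd : B ^ Q < d := lt_of_le_of_lt (le_max_right _ _) hMd
    have hBt : Tendsto (fun n => B ^ (q n / p n)) atTop (nhds (B ^ Q)) := by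
      rcases eq_or_lt_of_le hB0 with hB0' | hBpos
      · refine Tendsto.congr' ?_ (tendsto_const_nhds (x := B ^ Q))
        filter_upwards [hq.eventually (eventually_gt_nhds hQ)] with n hn
        rw [← hB0', Real.zero_rpow hQ.ne', Real.zero_rpow hn.ne']
      · exact (Real.continuousAt_const_rpow hBpos.ne').tendsto.comp hq
    have hU : Tendsto (fun n => (2 * c) ^ (1 / p n) * d) atTop (nhds d) := by
      simpa using (my_aux2 hp (2 * c) (by positivity)).mul_const d
    filter_upwards [hBt.eventually (eventually_lt_nhds hBQd),
      hU.eventually (eventually_lt_nhds hdb),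
      hp.eventually_ge_atTop 1, hq'.eventually_ge_atTop 1] with n h1 h2 hpn hqn
    have hp0 : (0:ℝ) < p n := lt_of_lt_of_le one_pos hpn
    have hq0 : (0:ℝ) < q n := lt_of_lt_of_le one_pos hqn
    have hT0 : (0:ℝ) ≤ (1 / p n) * ∫ x, |g x| ^ p n ∂μ +
        (1 / q n) * ∫ x, |h x| ^ q n ∂μ :=
      add_nonneg (mul_nonneg (by positivity) (hIg n))
        (mul_nonneg (by positivity) (hIh n))
    have key : (1 / p n) * ∫ x, |g x| ^ p n ∂μ +
        (1 / q n) * ∫ x, |h x| ^ q n ∂μ ≤ 2 * c * d ^ p n := by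
      have e1 : (1 / p n) * ∫ x, |g x| ^ p n ∂μ ≤ ∫ x, |g x| ^ p n ∂μ :=
        mul_le_of_le_one_left (hIg n) (by rw [div_le_one hp0]; exact hpn)
      have e2 : (1 / q n) * ∫ x, |h x| ^ q n ∂μ ≤ ∫ x, |h x| ^ q n ∂μ :=
        mul_le_of_le_one_left (hIh n) (by rw [div_le_one hq0]; exact hqn)
      have e3 : ∫ x, |g x| ^ p n ∂μ ≤ d ^ p n * c := by
        refine le_trans (my_integral_rpow_le hg hgb hp0.le) ?_
        exact mul_le_mul_of_nonneg_right
          (Real.rpow_le_rpow hA0 hAd.le hp0.le) hc.le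
      have e4 : ∫ x, |h x| ^ q n ∂μ ≤ d ^ p n * c := by
        refine le_trans (my_integral_rpow_le hh hhb hq0.le) ?_
        refine mul_le_mul_of_nonneg_right ?_ hc.le
        have : B ^ q n = (B ^ (q n / p n)) ^ p n := by
          rw [← Real.rpow_mul hB0, div_mul_cancel₀ _ hp0.ne']
        rw [this]
        exact Real.rpow_le_rpow (Real.rpow_nonneg hB0 _) h1.le hp0.le
      linarith
    have final : ((1 / p n) * ∫ x, |g x| ^ p n ∂μ +
        (1 / q n) * ∫ x, |h x| ^ q n ∂μ) ^ (1 / p n) ≤ (2 * c) ^ (1 / p n) * d := by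
      have := Real.rpow_le_rpow hT0 key (by positivity : (0:ℝ) ≤ 1 / p n)
      refine le_trans this (le_of_eq ?_)
      rw [Real.mul_rpow (by positivity) (Real.rpow_nonneg hd0.le _),
        ← Real.rpow_mul hd0.le, mul_one_div_cancel hp0.ne', Real.rpow_one]
    exact lt_of_le_of_lt final h2
end

section
/- Let Ω ⊂ ℝ^N be a nonempty bounded open set with closure cl(Ω). Let g_n, g : cl(Ω) → ℝ be continuous functions with g_n ≥ 0, such that g_n → g uniformly on cl(Ω), and let (p_n) be a sequence of real numbers with p_n → ∞. If ∫_Ω g_n(x)^{p_n} dx = 1 for every n, then max_{cl(Ω)} g = 1. -/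
open Real Set Filter MeasureTheory
open Topology

/-- If nonnegative continuous `g_n` converge uniformly on `cl Ω` to `g`, `p_n → ∞`, and
`∫_Ω g_n^{p_n} = 1` for all `n`, then `max_{cl Ω} g = 1`. -/
theorem sup_limit_of_normalization (N : ℕ) (Ω : Set (EuclideanSpace ℝ (Fin N)))
    (hne : Ω.Nonempty) (hb : Bornology.IsBounded Ω) (ho : IsOpen Ω)
    (g : ℕ → EuclideanSpace ℝ (Fin N) → ℝ) (G : EuclideanSpace ℝ (Fin N) → ℝ)
    (hgc : ∀ n, ContinuousOn (g n) (closure Ω))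
    (hGc : ContinuousOn G (closure Ω))
    (hgnn : ∀ n, ∀ x ∈ closure Ω, 0 ≤ g n x)
    (hunif : TendstoUniformlyOn g G atTop (closure Ω))
    (p : ℕ → ℝ) (hp : Tendsto p atTop atTop)
    (hnorm : ∀ n, ∫ x in Ω, g n x ^ p n = 1) :
    sSup (G '' closure Ω) = 1 := by
  set K := closure Ω with hK
  have hKc : IsCompact K := hb.isCompact_closure
  have hKne : K.Nonempty := hne.closure
  have himg : IsCompact (G '' K) := hKc.image_of_continuousOn hGc
  have himgne : (G '' K).Nonempty := hKne.image G
  set M := sSup (G '' K) with hM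
  obtain ⟨x₀, hx₀K, hx₀⟩ : M ∈ G '' K := himg.sSup_mem himgne
  have hle : ∀ x ∈ K, G x ≤ M := fun x hx => le_csSup himg.bddAbove ⟨x, hx, rfl⟩
  have hμΩfin : volume Ω ≠ ⊤ := (hb.measure_lt_top).ne
  have hΩK : Ω ⊆ K := subset_closure
  have hGnn : ∀ x ∈ K, 0 ≤ G x := by
    intro x hx
    exact le_of_tendsto_of_tendsto' tendsto_const_nhds (hunif.tendsto_at hx)
      (fun n => hgnn n x hx)
  have hM0 : 0 ≤ M := hx₀ ▸ hGnn x₀ hx₀K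
  -- integrability of g n ^ p n on Ω, when 0 ≤ p n
  have hint : ∀ n, 0 ≤ p n → IntegrableOn (fun x => g n x ^ p n) Ω volume := by
    intro n hpn
    have : ContinuousOn (fun x => g n x ^ p n) K :=
      (hgc n).rpow_const (fun x hx => Or.inr hpn)
    exact (this.integrableOn_compact hKc).mono_set hΩK
  by_contra hMne
  rcases lt_or_gt_of_ne hMne with hlt | hgt
  · -- M < 1 : integrals tend to 0
    set c : ℝ := (1 + M) / 2 with hc
    have hc0 : 0 < c := by positivity
    have hcM : M < c := by simp only [hc]; linarith
    have hc1 : c < 1 := by simp only [hc]; linarith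
    have h1 : ∀ᶠ n in atTop, ∀ x ∈ K, g n x ≤ c := by
      filter_upwards [Metric.tendstoUniformlyOn_iff.mp hunif (c - M) (by linarith)] with n hn x hx
      have hd := hn x hx
      rw [Real.dist_eq] at hd
      have habs := abs_lt.mp hd
      have := hle x hx
      linarith [habs.1, habs.2]
    have h2 : ∀ᶠ n in atTop, 0 ≤ p n := hp.eventually_ge_atTop 0
    have h3 : Tendsto (fun n => c ^ p n * (volume Ω).toReal) atTop (𝓝 0) := by
      have := (tendsto_rpow_atTop_of_base_lt_one c (by linarith) hc1).comp hp
      simpa using this.mul_const (volume Ω).toReal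
    have h4 : ∀ᶠ n in atTop, c ^ p n * (volume Ω).toReal < 1 :=
      (tendsto_order.1 h3).2 1 one_pos
    obtain ⟨n, hn1, hn2, hn4⟩ := (h1.and (h2.and h4)).exists
    have hbound : ∫ x in Ω, g n x ^ p n ≤ c ^ p n * (volume Ω).toReal := by
      calc ∫ x in Ω, g n x ^ p n ≤ ∫ _x in Ω, c ^ p n := by
            refine setIntegral_mono_on (hint n hn2)
              (integrableOn_const hμΩfin) ho.measurableSet ?_
            intro x hx
            exact Real.rpow_le_rpow (hgnn n x (hΩK hx)) (hn1 x (hΩK hx)) hn2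
        _ = c ^ p n * (volume Ω).toReal := by
            rw [setIntegral_const, smul_eq_mul, mul_comm]; rfl
    rw [hnorm n] at hbound
    linarith
  · -- M > 1 : integrals blow up
    set c : ℝ := (1 + M) / 2 with hc
    have hc1 : 1 < c := by simp only [hc]; linarith
    have hcM : c < M := by simp only [hc]; linarith
    -- neighborhood where G > c
    have hev : ∀ᶠ x in nhdsWithin x₀ K, c < G x := by
      have := hGc x₀ hx₀K
      have : Tendsto G (nhdsWithin x₀ K) (nhds M) := hx₀ ▸ this
      exact this.eventually (eventually_gt_nhds hcM)
    obtain ⟨U, hUo, hx₀U, hUsub⟩ := mem_nhdsWithin.mp hev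
    set W := U ∩ Ω with hW
    have hWo : IsOpen W := hUo.inter ho
    have hWne : W.Nonempty := by
      have := mem_closure_iff.mp hx₀K U hUo hx₀U
      exact this
    have hμW : 0 < volume W := hWo.measure_pos volume hWne
    have hμWfin : volume W ≠ ⊤ := ((measure_mono inter_subset_right).trans_lt
      hb.measure_lt_top).ne
    have hμWr : 0 < (volume W).toReal := ENNReal.toReal_pos hμW.ne' hμWfin
    set b : ℝ := (1 + c) / 2 with hbdef
    have hb1 : 1 < b := by simp only [hbdef]; linarith
    have hbc : b < c := by simp only [hbdef]; linarith
    have hWK : W ⊆ K := inter_subset_right.trans hΩK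
    have h1 : ∀ᶠ n in atTop, ∀ x ∈ W, b ≤ g n x := by
      filter_upwards [Metric.tendstoUniformlyOn_iff.mp hunif (c - b) (by linarith)] with n hn x hx
      have hd := hn x (hWK hx)
      rw [Real.dist_eq] at hd
      have habs := abs_lt.mp hd
      have hGx : c < G x := hUsub ⟨hx.1, hWK hx⟩
      linarith [habs.1, habs.2]
    have h2 : ∀ᶠ n in atTop, 0 ≤ p n := hp.eventually_ge_atTop 0
    have hbt : Tendsto (fun x : ℝ => b ^ x) atTop atTop := by
      simp_rw [Real.rpow_def_of_pos (by linarith : (0:ℝ) < b)]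
      exact Real.tendsto_exp_atTop.comp
        (tendsto_id.const_mul_atTop (Real.log_pos hb1))
    have h3 : Tendsto (fun n => b ^ p n * (volume W).toReal) atTop atTop :=
      (hbt.comp hp).atTop_mul_const hμWr
    have h4 : ∀ᶠ n in atTop, 1 < b ^ p n * (volume W).toReal :=
      h3.eventually_gt_atTop 1
    obtain ⟨n, hn1, hn2, hn4⟩ := (h1.and (h2.and h4)).exists
    have hbound : b ^ p n * (volume W).toReal ≤ ∫ x in Ω, g n x ^ p n := by
      calc b ^ p n * (volume W).toReal ≤ ∫ x in W, g n x ^ p n := by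
            refine setIntegral_ge_of_const_le_real hWo.measurableSet hμWfin ?_
              ((hint n hn2).mono_set inter_subset_right)
            intro x hx
            calc b ^ p n = b ^ p n := rfl
              _ ≤ g n x ^ p n := Real.rpow_le_rpow (by linarith) (hn1 x hx) hn2
        _ ≤ ∫ x in Ω, g n x ^ p n := by
            refine setIntegral_mono_set (hint n hn2) ?_ (HasSubset.Subset.eventuallyLE inter_subset_right)
            filter_upwards [ae_restrict_mem ho.measurableSet] with x hx
            exact Real.rpow_nonneg (hgnn n x (hΩK hx)) (p n)
    rw [hnorm n] at hbound
    linarith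
end

section
/- Let Ω ⊂ ℝ^N be a nonempty bounded open set with closure cl(Ω). Let g_n, h_n, g, h : cl(Ω) → ℝ be continuous functions with g_n ≥ 0 and h_n ≥ 0, such that g_n → g and h_n → h uniformly on cl(Ω), and let (p_n) be a sequence of real numbers with p_n → ∞. If ∫_Ω g_n(x)^{p_n} dx = ∫_Ω h_n(x)^{p_n} dx for every n, then max_{cl(Ω)} g = max_{cl(Ω)} h. -/
open Real Set Filter MeasureTheory Metric

lemma sup_limit_aux (N : ℕ) (Ω : Set (EuclideanSpace ℝ (Fin N)))
    (hne : Ω.Nonempty) (hb : Bornology.IsBounded Ω) (ho : IsOpen Ω)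
    (g h : ℕ → EuclideanSpace ℝ (Fin N) → ℝ)
    (G H : EuclideanSpace ℝ (Fin N) → ℝ)
    (hgc : ∀ n, ContinuousOn (g n) (closure Ω))
    (hhc : ∀ n, ContinuousOn (h n) (closure Ω))
    (hGc : ContinuousOn G (closure Ω)) (hHc : ContinuousOn H (closure Ω))
    (hgnn : ∀ n, ∀ x ∈ closure Ω, 0 ≤ g n x)
    (hhnn : ∀ n, ∀ x ∈ closure Ω, 0 ≤ h n x)
    (hgunif : TendstoUniformlyOn g G atTop (closure Ω))
    (hhunif : TendstoUniformlyOn h H atTop (closure Ω))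
    (p : ℕ → ℝ) (hp : Tendsto p atTop atTop)
    (hle : ∀ n, ∫ x in Ω, g n x ^ p n ≤ ∫ x in Ω, h n x ^ p n) :
    sSup (G '' closure Ω) ≤ sSup (H '' closure Ω) := by
  by_contra hcon
  push_neg at hcon
  set M : ℝ := sSup (G '' closure Ω) with hM
  set M' : ℝ := sSup (H '' closure Ω) with hM'
  have hK : IsCompact (closure Ω) := hb.isCompact_closure
  have hKne : (closure Ω).Nonempty := hne.mono subset_closure
  have hKGc : IsCompact (G '' closure Ω) := hK.image_of_continuousOn hGc
  have hKHc : IsCompact (H '' closure Ω) := hK.image_of_continuousOn hHc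
  -- H is nonneg on the closure
  have hHnn : ∀ x ∈ closure Ω, 0 ≤ H x := by
    intro x hx
    exact ge_of_tendsto (hhunif.tendsto_at hx)
      (Eventually.of_forall fun n => hhnn n x hx)
  -- M' ≥ 0
  have hM'nn : 0 ≤ M' := by
    obtain ⟨x, hx⟩ := hKne
    exact le_trans (hHnn x hx) (le_csSup hKHc.bddAbove ⟨x, hx, rfl⟩)
  set ε : ℝ := (M - M') / 4 with hε
  have hεpos : 0 < ε := by simp only [hε]; linarith
  set a : ℝ := M - 2 * ε with ha
  set b : ℝ := M' + ε with hbdef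
  have hbpos : 0 < b := by simp only [hbdef]; linarith
  have hba : b < a := by simp only [ha, hbdef, hε]; linarith
  -- M is attained at some x₀ ∈ closure Ω
  obtain ⟨x₀, hx₀, hGx₀⟩ : ∃ x₀ ∈ closure Ω, G x₀ = M := by
    have := hKGc.sSup_mem (hKne.image G)
    obtain ⟨x, hx, hGx⟩ := this
    exact ⟨x, hx, hGx⟩
  -- a neighborhood (within closure Ω) on which G > M - ε
  have hnbhd : {x | M - ε < G x} ∈ nhdsWithin x₀ (closure Ω) :=
    (hGc x₀ hx₀).eventually (by
      rw [hGx₀]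
      exact eventually_gt_nhds (by linarith))
  rw [Metric.mem_nhdsWithin_iff] at hnbhd
  obtain ⟨δ, hδpos, hδ⟩ := hnbhd
  -- a point of Ω close to x₀
  obtain ⟨y, hyΩ, hyd⟩ : ∃ y ∈ Ω, dist x₀ y < δ / 2 := by
    rw [Metric.mem_closure_iff] at hx₀
    exact hx₀ (δ / 2) (by linarith)
  obtain ⟨r₀, hr₀pos, hr₀⟩ := Metric.isOpen_iff.mp ho y hyΩ
  set r : ℝ := min r₀ (δ / 2) with hr
  have hrpos : 0 < r := lt_min hr₀pos (by linarith)
  have hBΩ : ball y r ⊆ Ω := fun z hz => hr₀ (mem_ball.mpr (lt_of_lt_of_le (mem_ball.mp hz) (min_le_left _ _)))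
  have hBδ : ball y r ⊆ ball x₀ δ := by
    intro z hz
    have h1 : dist z y < δ / 2 := lt_of_lt_of_le (mem_ball.mp hz) (min_le_right _ _)
    have h2 : dist z x₀ ≤ dist z y + dist y x₀ := dist_triangle z y x₀
    have h3 : dist y x₀ = dist x₀ y := dist_comm y x₀
    simp only [mem_ball] at *
    linarith
  have hGB : ∀ x ∈ ball y r, M - ε < G x := by
    intro x hx
    exact hδ ⟨hBδ hx, subset_closure (hBΩ hx)⟩
  -- measure quantities
  set vB : ℝ := (volume (ball y r)).toReal with hvB
  set vΩ : ℝ := (volume Ω).toReal with hvΩ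
  have hvolΩ : volume Ω < ⊤ := hb.measure_lt_top
  have hvBpos : 0 < vB := by
    rw [hvB, ENNReal.toReal_pos_iff]
    refine ⟨measure_ball_pos volume y hrpos, ?_⟩
    exact lt_of_le_of_lt (measure_mono (hBΩ.trans (fun _ => id))) hvolΩ
  -- eventual facts
  have hev1 : ∀ᶠ n in atTop, ∀ x ∈ closure Ω, dist (G x) (g n x) < ε :=
    (Metric.tendstoUniformlyOn_iff.mp hgunif) ε hεpos
  have hev2 : ∀ᶠ n in atTop, ∀ x ∈ closure Ω, dist (H x) (h n x) < ε :=
    (Metric.tendstoUniformlyOn_iff.mp hhunif) ε hεpos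
  have hab1 : 1 < a / b := (one_lt_div hbpos).mpr hba
  have hratio : Tendsto (fun n => (a / b) ^ p n) atTop atTop := by
    have h0 : Tendsto (fun t : ℝ => (a / b) ^ t) atTop atTop := by
      simp_rw [Real.rpow_def_of_pos (by positivity : (0:ℝ) < a / b)]
      exact Real.tendsto_exp_atTop.comp
        (Tendsto.const_mul_atTop (Real.log_pos hab1) tendsto_id)
    exact h0.comp hp
  have hev3 : ∀ᶠ n in atTop, vΩ / vB < (a / b) ^ p n :=
    hratio.eventually_gt_atTop _
  have hev4 : ∀ᶠ n in atTop, 0 < p n := hp.eventually_gt_atTop 0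
  obtain ⟨n, h1, h2, h3, h4⟩ := (hev1.and (hev2.and (hev3.and hev4))).exists
  -- bounds on functions
  have hgB : ∀ x ∈ ball y r, a ≤ g n x := by
    intro x hx
    have hxc : x ∈ closure Ω := subset_closure (hBΩ hx)
    have := h1 x hxc
    rw [Real.dist_eq, abs_lt] at this
    have := hGB x hx
    simp only [ha]; linarith
  have hhΩ : ∀ x ∈ Ω, h n x ≤ b := by
    intro x hx
    have hxc : x ∈ closure Ω := subset_closure hx
    have := h2 x hxc
    rw [Real.dist_eq, abs_lt] at this
    have hHle : H x ≤ M' := le_csSup hKHc.bddAbove ⟨x, hxc, rfl⟩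
    simp only [hbdef]; linarith
  have hapos : 0 < a := lt_trans hbpos hba
  -- integrability
  have hΩm : MeasurableSet Ω := ho.measurableSet
  have hint_g : IntegrableOn (fun x => g n x ^ p n) Ω volume := by
    refine (((hgc n).rpow_const fun x _ => Or.inr h4.le).integrableOn_compact hK).mono_set
      subset_closure
  have hint_h : IntegrableOn (fun x => h n x ^ p n) Ω volume := by
    refine (((hhc n).rpow_const fun x _ => Or.inr h4.le).integrableOn_compact hK).mono_set
      subset_closure
  -- upper bound for the h-integral
  have hupper : ∫ x in Ω, h n x ^ p n ≤ vΩ * b ^ p n := by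
    have : ∫ x in Ω, h n x ^ p n ≤ ∫ _x in Ω, b ^ p n := by
      refine setIntegral_mono_on hint_h
        (integrableOn_const (C := b ^ p n) hvolΩ.ne enorm_ne_top) hΩm ?_
      intro x hx
      exact Real.rpow_le_rpow (hhnn n x (subset_closure hx)) (hhΩ x hx) h4.le
    rwa [setIntegral_const, smul_eq_mul, measureReal_def] at this
  -- lower bound for the g-integral
  have hlower : vB * a ^ p n ≤ ∫ x in Ω, g n x ^ p n := by
    have step1 : ∫ _x in ball y r, a ^ p n ≤ ∫ x in ball y r, g n x ^ p n := by
      refine setIntegral_mono_on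
        (integrableOn_const (C := a ^ p n) (ne_of_lt ?_) enorm_ne_top) (hint_g.mono_set hBΩ)
        measurableSet_ball ?_
      · exact lt_of_le_of_lt (measure_mono hBΩ) hvolΩ
      · intro x hx
        exact Real.rpow_le_rpow hapos.le (hgB x hx) h4.le
    have step2 : ∫ x in ball y r, g n x ^ p n ≤ ∫ x in Ω, g n x ^ p n := by
      refine setIntegral_mono_set hint_g ?_ (HasSubset.Subset.eventuallyLE hBΩ)
      filter_upwards [ae_restrict_mem hΩm] with x hx
      exact Real.rpow_nonneg (hgnn n x (subset_closure hx)) _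
    rw [setIntegral_const, smul_eq_mul, measureReal_def] at step1
    linarith
  -- the contradiction
  have hbppos : 0 < b ^ p n := Real.rpow_pos_of_pos hbpos _
  have happ : a ^ p n = (a / b) ^ p n * b ^ p n := by
    rw [Real.div_rpow hapos.le hbpos.le, div_mul_cancel₀]
    exact ne_of_gt hbppos
  have key : vΩ * b ^ p n < vB * a ^ p n := by
    rw [happ]
    have h5 : vΩ < vB * (a / b) ^ p n := by
      rw [div_lt_iff₀ hvBpos] at h3
      linarith
    calc vΩ * b ^ p n < vB * (a / b) ^ p n * b ^ p n :=
          mul_lt_mul_of_pos_right h5 hbppos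
      _ = vB * ((a / b) ^ p n * b ^ p n) := by ring
  have := hle n
  linarith

/-- If nonnegative continuous `g_n → g` and `h_n → h` uniformly on `cl Ω`, `p_n → ∞`,
and `∫_Ω g_n^{p_n} = ∫_Ω h_n^{p_n}` for all `n`, then `max_{cl Ω} g = max_{cl Ω} h`. -/
theorem sup_limit_of_equal_integrals (N : ℕ) (Ω : Set (EuclideanSpace ℝ (Fin N)))
    (hne : Ω.Nonempty) (hb : Bornology.IsBounded Ω) (ho : IsOpen Ω)
    (g h : ℕ → EuclideanSpace ℝ (Fin N) → ℝ)
    (G H : EuclideanSpace ℝ (Fin N) → ℝ)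
    (hgc : ∀ n, ContinuousOn (g n) (closure Ω))
    (hhc : ∀ n, ContinuousOn (h n) (closure Ω))
    (hGc : ContinuousOn G (closure Ω)) (hHc : ContinuousOn H (closure Ω))
    (hgnn : ∀ n, ∀ x ∈ closure Ω, 0 ≤ g n x)
    (hhnn : ∀ n, ∀ x ∈ closure Ω, 0 ≤ h n x)
    (hgunif : TendstoUniformlyOn g G atTop (closure Ω))
    (hhunif : TendstoUniformlyOn h H atTop (closure Ω))
    (p : ℕ → ℝ) (hp : Tendsto p atTop atTop)
    (heq : ∀ n, ∫ x in Ω, g n x ^ p n = ∫ x in Ω, h n x ^ p n) :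
    sSup (G '' closure Ω) = sSup (H '' closure Ω) := by
  refine le_antisymm ?_ ?_
  · exact sup_limit_aux N Ω hne hb ho g h G H hgc hhc hGc hHc hgnn hhnn hgunif hhunif
      p hp (fun n => le_of_eq (heq n))
  · exact sup_limit_aux N Ω hne hb ho h g H G hhc hgc hHc hGc hhnn hgnn hhunif hgunif
      p hp (fun n => le_of_eq (heq n).symm)
end

section
/- Let Ω ⊂ ℝ^N be a nonempty bounded convex open set and let q > N be a real number. Then there exists a constant C > 0, depending only on q, N and Ω, such that for every continuously differentiable function v : ℝ^N → ℝ for which there exists a point x₀ ∈ Ω with v(x₀) = 0, one has (∫_Ω |v(x)|^q dx)^{1/q} ≤ C (∫_Ω ‖∇v(x)‖^q dx)^{1/q}. -/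
open Real Set MeasureTheory

set_option maxHeartbeats 1000000

/-- Lemma 2.4: Morrey-type Poincaré inequality. For `q > N` there is a constant
`C = C(q,N,Ω) > 0` such that every `C¹` function `v` vanishing at some point of `Ω`
satisfies `‖v‖_{L^q(Ω)} ≤ C ‖∇v‖_{L^q(Ω)}`. -/
theorem morrey_poincare (N : ℕ) (Ω : Set (EuclideanSpace ℝ (Fin N)))
    (hne : Ω.Nonempty) (hb : Bornology.IsBounded Ω) (hconv : Convex ℝ Ω)
    (ho : IsOpen Ω) (q : ℝ) (hq : (N : ℝ) < q) :
    ∃ C : ℝ, 0 < C ∧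
      ∀ v : EuclideanSpace ℝ (Fin N) → ℝ, ContDiff ℝ 1 v →
        (∃ x₀ ∈ Ω, v x₀ = 0) →
        (∫ x in Ω, |v x| ^ q) ^ (1 / q) ≤
          C * (∫ x in Ω, ‖fderiv ℝ v x‖ ^ q) ^ (1 / q) := by
  have hq0 : 0 < q := lt_of_le_of_lt (Nat.cast_nonneg N) hq
  rcases Nat.eq_zero_or_pos N with hN0 | hNpos
  · subst hN0
    haveI : Subsingleton (EuclideanSpace ℝ (Fin 0)) := ⟨fun a b => (WithLp.ext_iff (p := 2)).2 (funext fun i => i.elim0)⟩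
    refine ⟨1, one_pos, fun v hv hex => ?_⟩
    obtain ⟨x₀, hx₀, hv0⟩ := hex
    have hvz : ∀ x, v x = 0 := fun x => by rw [Subsingleton.elim x x₀, hv0]
    have h1 : (∫ x in Ω, |v x| ^ q) = 0 := by
      simp [hvz, Real.zero_rpow hq0.ne']
    rw [h1, Real.zero_rpow (by positivity : 1 / q ≠ 0), one_mul]
    exact Real.rpow_nonneg (setIntegral_nonneg ho.measurableSet
      (fun x _ => Real.rpow_nonneg (norm_nonneg _) _)) _
  have hmeas : MeasurableSet Ω := ho.measurableSet
  have hN1 : (1 : ℝ) ≤ N := by exact_mod_cast hNpos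
  have hq1 : (1 : ℝ) < q := lt_of_le_of_lt hN1 hq
  obtain ⟨R, hR0, hΩR⟩ : ∃ R : ℝ, 0 < R ∧ Ω ⊆ Metric.closedBall 0 R :=
    hb.subset_closedBall_lt 0 0
  set a : ℝ := (N + q - 2) / (2 * q) with ha_def
  set b : ℝ := (N + q - 2) / 2 with hb_def
  set c : ℝ := (N + q - 2) / (2 * (q - 1)) with hc_def
  set q' : ℝ := q / (q - 1) with hq'_def
  have hq1' : (0:ℝ) < q - 1 := by linarith
  have hNq2 : (0:ℝ) < N + q - 2 := by linarith
  have ha0 : 0 < a := by positivity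
  have hb0 : 0 < b := by positivity
  have hc0 : 0 < c := by positivity
  have hc1 : c < 1 := by
    rw [hc_def, div_lt_one (by linarith)]; linarith
  have hbN : (-1:ℝ) < b - N := by
    rw [hb_def]; linarith
  have hconj : q.HolderConjugate q' := (Real.holderConjugate_iff_eq_conjExponent hq1).2 rfl
  have haq : a * q = b := by rw [ha_def, hb_def]; field_simp
  have haq' : a * q' = c := by
    rw [ha_def, hq'_def, hc_def]; field_simp
  have hqq' : (1 / q') * q = q - 1 := by
    rw [hq'_def]; field_simp
  set K : ℝ := ∫ t in Ioc (0:ℝ) 1, t ^ (-c) with hK_def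
  set M : ℝ := ∫ t in Ioc (0:ℝ) 1, t ^ (b - N) with hM_def
  have hK0 : 0 ≤ K := setIntegral_nonneg measurableSet_Ioc
    (fun t ht => Real.rpow_nonneg ht.1.le _)
  have hM0 : 0 ≤ M := setIntegral_nonneg measurableSet_Ioc
    (fun t ht => Real.rpow_nonneg ht.1.le _)
  have hKint : IntegrableOn (fun t : ℝ => t ^ (-c)) (Ioc 0 1) :=
    (intervalIntegral.intervalIntegrable_rpow' (by linarith)).1
  have hMint : IntegrableOn (fun t : ℝ => t ^ (b - N)) (Ioc 0 1) :=
    (intervalIntegral.intervalIntegrable_rpow' hbN).1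
  set A : ℝ := (2 * R) ^ q * (K + 1) ^ (q - 1) * (M + 1) with hA_def
  have hA0 : 0 < A := by
    apply mul_pos (mul_pos _ _)
    · linarith
    · exact Real.rpow_pos_of_pos (by linarith) _
    · exact Real.rpow_pos_of_pos (by linarith) _
  refine ⟨A ^ (1 / q), Real.rpow_pos_of_pos hA0 _, fun v hv hex => ?_⟩
  obtain ⟨x₀, hx₀, hv0⟩ := hex
  set Dv := fderiv ℝ v with hDv_def
  have hDvc : Continuous Dv := hv.continuous_fderiv one_ne_zero
  set g : EuclideanSpace ℝ (Fin N) → ℝ := fun y => ‖Dv y‖ ^ q with hg_def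
  have hgc : Continuous g := hDvc.norm.rpow_const fun y => Or.inr hq0.le
  set I : ℝ := ∫ x in Ω, g x with hI_def
  have hI0 : 0 ≤ I := setIntegral_nonneg hmeas fun x _ => Real.rpow_nonneg (norm_nonneg _) _
  obtain ⟨B, hB⟩ : ∃ B : ℝ, ∀ y ∈ Metric.closedBall (0:EuclideanSpace ℝ (Fin N)) R, ‖Dv y‖ ≤ B := by
    obtain ⟨B, hB⟩ := (isCompact_closedBall (0:EuclideanSpace ℝ (Fin N)) R).exists_bound_of_continuousOn
      hDvc.continuousOn
    exact ⟨B, fun y hy => by simpa using hB y hy⟩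
  have hB0 : 0 ≤ B := le_trans (norm_nonneg _) (hB 0 (Metric.mem_closedBall_self hR0.le))
  set γ : EuclideanSpace ℝ (Fin N) → ℝ → EuclideanSpace ℝ (Fin N) := fun x t => x₀ + t • (x - x₀) with hγ_def
  have hγΩ : ∀ x ∈ Ω, ∀ t ∈ Icc (0:ℝ) 1, γ x t ∈ Ω := by
    intro x hx t ht
    have : γ x t = (1 - t) • x₀ + t • x := by
      simp only [hγ_def]; module
    rw [this]
    exact hconv hx₀ hx (by linarith [ht.2]) ht.1 (by ring)
  have hγc : ∀ x : EuclideanSpace ℝ (Fin N), Continuous (γ x) := fun x =>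
    continuous_const.add (continuous_id.smul continuous_const)
  set W : EuclideanSpace ℝ (Fin N) → ℝ → ℝ := fun x t => ‖Dv (γ x t)‖ ^ q * t ^ b with hW_def
  have hWc : Continuous (fun p : EuclideanSpace ℝ (Fin N) × ℝ => W p.1 p.2) := by
    apply Continuous.mul
    · exact ((hDvc.comp (continuous_const.add
        (continuous_snd.smul (continuous_fst.sub continuous_const)))).norm).rpow_const
        fun p => Or.inr hq0.le
    · exact continuous_snd.rpow_const fun p => Or.inr hb0.le
  haveI : IsFiniteMeasure (volume.restrict Ω) :=
    ⟨by rw [Measure.restrict_apply_univ]; exact hb.measure_lt_top⟩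
  haveI : IsFiniteMeasure (volume.restrict (Ioc (0:ℝ) 1)) :=
    ⟨by rw [Measure.restrict_apply_univ, Real.volume_Ioc]; simp⟩
  have hWint : Integrable (fun p : EuclideanSpace ℝ (Fin N) × ℝ => W p.1 p.2)
      ((volume.restrict Ω).prod (volume.restrict (Ioc (0:ℝ) 1))) := by
    apply Integrable.mono' (integrable_const (B ^ q)) hWc.aestronglyMeasurable
    rw [Measure.prod_restrict]
    filter_upwards [ae_restrict_mem (hmeas.prod measurableSet_Ioc)] with p hp
    have h1 : γ p.1 p.2 ∈ Metric.closedBall (0:EuclideanSpace ℝ (Fin N)) R :=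
      hΩR (hγΩ p.1 hp.1 p.2 (Ioc_subset_Icc_self hp.2))
    have h2 : ‖Dv (γ p.1 p.2)‖ ^ q ≤ B ^ q :=
      Real.rpow_le_rpow (norm_nonneg _) (hB _ h1) hq0.le
    have h3 : p.2 ^ b ≤ 1 := Real.rpow_le_one hp.2.1.le hp.2.2 hb0.le
    have h4 : (0:ℝ) ≤ p.2 ^ b := Real.rpow_nonneg hp.2.1.le _
    have h5 : (0:ℝ) ≤ ‖Dv (γ p.1 p.2)‖ ^ q := Real.rpow_nonneg (norm_nonneg _) _
    calc ‖W p.1 p.2‖ = ‖Dv (γ p.1 p.2)‖ ^ q * p.2 ^ b := by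
          rw [hW_def, Real.norm_of_nonneg (mul_nonneg h5 h4)]
      _ ≤ B ^ q * 1 := mul_le_mul h2 h3 h4 (Real.rpow_nonneg hB0 _)
      _ = B ^ q := mul_one _
  clear_value a b c q' K M A Dv g I γ W
  have hptwise : ∀ x ∈ Ω, |v x| ^ q ≤
      (2*R)^q * (K+1)^(q-1) * ∫ t in Ioc (0:ℝ) 1, W x t := by
    intro x hx
    have hγcx : Continuous (γ x) := by
      rw [hγ_def]; exact continuous_const.add (continuous_id.smul continuous_const)
    have hDγc : Continuous fun t => ‖Dv (γ x t)‖ := (hDvc.comp hγcx).norm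
    -- the derivative of t ↦ v (γ x t)
    have hderiv : ∀ t : ℝ, HasDerivAt (fun s => v (γ x s)) ((Dv (γ x t)) (x - x₀)) t := by
      intro t
      have h1 : HasDerivAt (fun s : ℝ => γ x s) (x - x₀) t := by
        rw [hγ_def]
        simpa using ((hasDerivAt_id t).smul_const (x - x₀)).const_add x₀
      have h2 : HasFDerivAt v (Dv (γ x t)) (γ x t) := by
        rw [hDv_def]
        exact (hv.differentiable one_ne_zero).differentiableAt.hasFDerivAt
      exact h2.comp_hasDerivAt t h1
    have hcont : Continuous fun t => (Dv (γ x t)) (x - x₀) :=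
      (hDvc.comp hγcx).clm_apply continuous_const
    have hFTC : v x = ∫ t in Ioc (0:ℝ) 1, (Dv (γ x t)) (x - x₀) := by
      have h := intervalIntegral.integral_eq_sub_of_hasDerivAt
        (f := fun s => v (γ x s)) (f' := fun t => (Dv (γ x t)) (x - x₀))
        (a := 0) (b := 1) (fun t _ => hderiv t)
        (hcont.intervalIntegrable 0 1)
      rw [intervalIntegral.integral_of_le zero_le_one] at h
      have hγ1 : γ x 1 = x := by rw [hγ_def]; simp
      have hγ0 : γ x 0 = x₀ := by rw [hγ_def]; simp
      simp only [hγ1, hγ0, hv0, sub_zero] at h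
      exact h.symm
    have hd : ‖x - x₀‖ ≤ 2 * R := by
      have h1 : ‖x‖ ≤ R := by simpa using hΩR hx
      have h2 : ‖x₀‖ ≤ R := by simpa using hΩR hx₀
      calc ‖x - x₀‖ ≤ ‖x‖ + ‖x₀‖ := norm_sub_le _ _
        _ ≤ 2 * R := by linarith
    -- step 1: |v x| ≤ (2R) * ∫ ‖Dv (γ x t)‖
    have hstep1 : |v x| ≤ ∫ t in Ioc (0:ℝ) 1, ‖Dv (γ x t)‖ * (2 * R) := by
      calc |v x| ≤ ∫ t in Ioc (0:ℝ) 1, ‖(Dv (γ x t)) (x - x₀)‖ := by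
            rw [hFTC, ← Real.norm_eq_abs]; exact norm_integral_le_integral_norm _
        _ ≤ ∫ t in Ioc (0:ℝ) 1, ‖Dv (γ x t)‖ * (2 * R) := by
            apply setIntegral_mono_on
            · exact hcont.norm.integrableOn_Ioc
            · exact (hDγc.mul continuous_const).integrableOn_Ioc
            · exact measurableSet_Ioc
            · intro t _
              calc ‖(Dv (γ x t)) (x - x₀)‖ ≤ ‖Dv (γ x t)‖ * ‖x - x₀‖ :=
                    (Dv (γ x t)).le_opNorm _
                _ ≤ ‖Dv (γ x t)‖ * (2 * R) :=
                    mul_le_mul_of_nonneg_left hd (norm_nonneg _)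
    have hq'0 : 0 < q' := hconj.symm.pos
    have hstep1' : |v x| ≤ (2*R) * ∫ t in Ioc (0:ℝ) 1, ‖Dv (γ x t)‖ := by
      calc |v x| ≤ ∫ t in Ioc (0:ℝ) 1, ‖Dv (γ x t)‖ * (2 * R) := hstep1
        _ = (2*R) * ∫ t in Ioc (0:ℝ) 1, ‖Dv (γ x t)‖ := by
            rw [integral_mul_const, mul_comm]
    set φ : ℝ → ℝ := fun t => ‖Dv (γ x t)‖ * t ^ a with hφ_def
    have hφc : Continuous φ := hDγc.mul (continuous_id.rpow_const fun _ => Or.inr ha0.le)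
    have hsplit : ∫ t in Ioc (0:ℝ) 1, ‖Dv (γ x t)‖ = ∫ t in Ioc (0:ℝ) 1, φ t * t ^ (-a) := by
      apply setIntegral_congr_fun measurableSet_Ioc
      intro t ht
      have h1 : t ^ a * t ^ (-a) = 1 := by
        rw [← Real.rpow_add ht.1]; simp
      simp only [hφ_def]
      rw [mul_assoc, h1, mul_one]
    have hmem1 : MemLp φ (ENNReal.ofReal q) (volume.restrict (Ioc (0:ℝ) 1)) := by
      apply MemLp.of_bound hφc.aestronglyMeasurable B
      filter_upwards [ae_restrict_mem measurableSet_Ioc] with t ht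
      have h1 : ‖Dv (γ x t)‖ ≤ B := hB _ (hΩR (hγΩ x hx t (Ioc_subset_Icc_self ht)))
      have h2 : t ^ a ≤ 1 := Real.rpow_le_one ht.1.le ht.2 ha0.le
      have h3 : (0:ℝ) ≤ t ^ a := Real.rpow_nonneg ht.1.le _
      simp only [hφ_def]
      rw [Real.norm_of_nonneg (mul_nonneg (norm_nonneg _) h3)]
      calc ‖Dv (γ x t)‖ * t ^ a ≤ B * 1 := mul_le_mul h1 h2 h3 hB0
        _ = B := mul_one _
    have hmem2 : MemLp (fun t : ℝ => t ^ (-a)) (ENNReal.ofReal q')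
        (volume.restrict (Ioc (0:ℝ) 1)) := by
      have hne0 : ENNReal.ofReal q' ≠ 0 := by
        simp [ENNReal.ofReal_eq_zero, not_le, hq'0]
      have hmeasf : AEStronglyMeasurable (fun t : ℝ => t ^ (-a))
          (volume.restrict (Ioc (0:ℝ) 1)) :=
        (measurable_id.pow_const _).aestronglyMeasurable
      refine (memLp_norm_rpow_iff hmeasf hne0 ENNReal.ofReal_ne_top).1 ?_
      rw [ENNReal.div_self hne0 ENNReal.ofReal_ne_top, memLp_one_iff_integrable]
      apply hKint.congr
      filter_upwards [ae_restrict_mem measurableSet_Ioc] with t ht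
      rw [ENNReal.toReal_ofReal hq'0.le,
        Real.norm_of_nonneg (Real.rpow_nonneg ht.1.le _),
        ← Real.rpow_mul ht.1.le, neg_mul, haq']
    have hφ0 : 0 ≤ᵐ[volume.restrict (Ioc (0:ℝ) 1)] φ := by
      filter_upwards [ae_restrict_mem measurableSet_Ioc] with t ht
      exact mul_nonneg (norm_nonneg _) (Real.rpow_nonneg ht.1.le _)
    have hψ0 : 0 ≤ᵐ[volume.restrict (Ioc (0:ℝ) 1)] fun t : ℝ => t ^ (-a) := by
      filter_upwards [ae_restrict_mem measurableSet_Ioc] with t ht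
      exact Real.rpow_nonneg ht.1.le _
    have hholder := integral_mul_le_Lp_mul_Lq_of_nonneg hconj hφ0 hψ0 hmem1 hmem2
    set J : ℝ := ∫ t in Ioc (0:ℝ) 1, W x t with hJ_def
    have hJ0 : 0 ≤ J := setIntegral_nonneg measurableSet_Ioc fun t ht => by
      rw [hW_def]
      exact mul_nonneg (Real.rpow_nonneg (norm_nonneg _) _) (Real.rpow_nonneg ht.1.le _)
    have hJeq : ∫ t in Ioc (0:ℝ) 1, φ t ^ q = J := by
      rw [hJ_def]
      apply setIntegral_congr_fun measurableSet_Ioc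
      intro t ht
      simp only [hφ_def, hW_def]
      rw [Real.mul_rpow (norm_nonneg _) (Real.rpow_nonneg ht.1.le _),
        ← Real.rpow_mul ht.1.le, haq]
    have hKeq : ∫ t in Ioc (0:ℝ) 1, (fun s : ℝ => s ^ (-a)) t ^ q' = K := by
      rw [hK_def]
      apply setIntegral_congr_fun measurableSet_Ioc
      intro t ht
      simp only
      rw [← Real.rpow_mul ht.1.le, neg_mul, haq']
    rw [hJeq, hKeq] at hholder
    have hstep2 : |v x| ≤ (2*R) * (J ^ (1/q) * K ^ (1/q')) := by
      calc |v x| ≤ (2*R) * ∫ t in Ioc (0:ℝ) 1, ‖Dv (γ x t)‖ := hstep1'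
        _ = (2*R) * ∫ t in Ioc (0:ℝ) 1, φ t * t ^ (-a) := by rw [hsplit]
        _ ≤ (2*R) * (J ^ (1/q) * K ^ (1/q')) := by
            apply mul_le_mul_of_nonneg_left hholder (by linarith)
    have hR2 : (0:ℝ) ≤ 2*R := by linarith
    have hrhs0 : 0 ≤ J ^ (1/q) * K ^ (1/q') :=
      mul_nonneg (Real.rpow_nonneg hJ0 _) (Real.rpow_nonneg hK0 _)
    calc |v x| ^ q ≤ ((2*R) * (J ^ (1/q) * K ^ (1/q'))) ^ q :=
          Real.rpow_le_rpow (abs_nonneg _) hstep2 hq0.le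
      _ = (2*R) ^ q * ((J ^ (1/q)) ^ q * (K ^ (1/q')) ^ q) := by
          rw [Real.mul_rpow hR2 hrhs0,
            Real.mul_rpow (Real.rpow_nonneg hJ0 _) (Real.rpow_nonneg hK0 _)]
      _ = (2*R) ^ q * (J * K ^ (q-1)) := by
          rw [← Real.rpow_mul hJ0, ← Real.rpow_mul hK0, one_div_mul_cancel hq0.ne',
            Real.rpow_one, hqq']
      _ ≤ (2*R) ^ q * (J * (K+1) ^ (q-1)) := by
          apply mul_le_mul_of_nonneg_left _ (Real.rpow_nonneg hR2 _)
          apply mul_le_mul_of_nonneg_left _ hJ0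
          exact Real.rpow_le_rpow hK0 (by linarith) (by linarith)
      _ = (2*R) ^ q * (K+1) ^ (q-1) * J := by ring
  have hineq2 : ∫ x in Ω, (∫ t in Ioc (0:ℝ) 1, W x t) ≤ M * I := by
    haveI : IsFiniteMeasure (volume.restrict Ω) :=
      ⟨by rw [Measure.restrict_apply_univ]; exact hb.measure_lt_top⟩
    haveI : IsFiniteMeasure (volume.restrict (Ioc (0:ℝ) 1)) :=
      ⟨by rw [Measure.restrict_apply_univ, Real.volume_Ioc]; simp⟩
    set F : EuclideanSpace ℝ (Fin N) → ℝ := Ω.indicator g with hF_def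
    have hgΩint : IntegrableOn g Ω := by
      apply IntegrableOn.mono_set _ hΩR
      exact hgc.continuousOn.integrableOn_compact (isCompact_closedBall _ _)
    have hFint : Integrable F := hgΩint.integrable_indicator hmeas
    have hF0 : ∀ y, 0 ≤ F y := fun y =>
      indicator_nonneg (fun z _ => by rw [hg_def]; exact Real.rpow_nonneg (norm_nonneg _) _) y
    -- inner bound for fixed t
    have hinner : ∀ t ∈ Ioc (0:ℝ) 1, (∫ x in Ω, W x t) ≤ t ^ (b - (N:ℝ)) * I := by
      intro t ht
      have htpos : 0 < t := ht.1
      set cc : EuclideanSpace ℝ (Fin N) := x₀ - t • x₀ with hcc_def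
      have hcomp : ∀ x : EuclideanSpace ℝ (Fin N), γ x t = t • x + cc := by
        intro x; rw [hγ_def, hcc_def]; simp only; module
      have hint1 : Integrable (fun y => F (y + cc)) := hFint.comp_add_right cc
      have hint2 : Integrable (fun x : EuclideanSpace ℝ (Fin N) => F (t • x + cc)) := by
        have := (integrable_comp_smul_iff volume (fun y => F (y + cc)) htpos.ne').2 hint1
        exact this
      have hset1 : ∫ x in Ω, W x t = t ^ b * ∫ x in Ω, F (t • x + cc) := by
        rw [hW_def]
        simp only
        rw [integral_mul_const]
        rw [mul_comm]
        congr 1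
        apply setIntegral_congr_fun hmeas
        intro x hx
        show ‖Dv (γ x t)‖ ^ q = F (t • x + cc)
        rw [← hcomp x, hF_def, indicator_of_mem (hγΩ x hx t (Ioc_subset_Icc_self ht)), hg_def]
      have hset2 : ∫ x in Ω, F (t • x + cc) ≤ ∫ x, F (t • x + cc) :=
        setIntegral_le_integral hint2 (Filter.Eventually.of_forall fun x => hF0 _)
      have hset3 : ∫ x : EuclideanSpace ℝ (Fin N), F (t • x + cc) = (t ^ (N:ℕ))⁻¹ * I := by
        have h1 := Measure.integral_comp_smul volume (fun y => F (y + cc)) t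
        simp only [finrank_euclideanSpace_fin] at h1
        rw [h1, integral_add_right_eq_self F cc, smul_eq_mul,
          abs_of_nonneg (inv_nonneg.2 (pow_nonneg htpos.le _))]
        rw [hI_def, ← integral_indicator hmeas]
      have hWnonneg : (0:ℝ) ≤ t ^ b := Real.rpow_nonneg htpos.le _
      calc ∫ x in Ω, W x t = t ^ b * ∫ x in Ω, F (t • x + cc) := hset1
        _ ≤ t ^ b * ((t ^ (N:ℕ))⁻¹ * I) := by
            rw [← hset3]; exact mul_le_mul_of_nonneg_left hset2 hWnonneg
        _ = t ^ (b - (N:ℝ)) * I := by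
            rw [← Real.rpow_natCast t N, ← Real.rpow_neg htpos.le,
              ← mul_assoc, ← Real.rpow_add htpos]
            norm_num [sub_eq_add_neg]
    -- Fubini and integrate the inner bound
    have hswap : ∫ x in Ω, (∫ t in Ioc (0:ℝ) 1, W x t)
        = ∫ t in Ioc (0:ℝ) 1, (∫ x in Ω, W x t) :=
      integral_integral_swap hWint
    rw [hswap]
    have hlhs_int : IntegrableOn (fun t => ∫ x in Ω, W x t) (Ioc (0:ℝ) 1) :=
      hWint.integral_prod_right
    have hrhs_int : IntegrableOn (fun t : ℝ => t ^ (b - (N:ℝ)) * I) (Ioc (0:ℝ) 1) :=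
      hMint.mul_const I
    calc ∫ t in Ioc (0:ℝ) 1, (∫ x in Ω, W x t)
        ≤ ∫ t in Ioc (0:ℝ) 1, t ^ (b - (N:ℝ)) * I :=
          setIntegral_mono_on hlhs_int hrhs_int measurableSet_Ioc hinner
      _ = M * I := by rw [integral_mul_const, hM_def]
  have h_vq_int : IntegrableOn (fun x => |v x| ^ q) Ω := by
    apply IntegrableOn.mono_set _ hΩR
    exact ((hv.continuous.abs.rpow_const fun x => Or.inr hq0.le)).continuousOn.integrableOn_compact
      (isCompact_closedBall _ _)
  have hJ_int : IntegrableOn (fun x => ∫ t in Ioc (0:ℝ) 1, W x t) Ω :=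
    hWint.integral_prod_left
  have hX0 : (0:ℝ) ≤ (2*R)^q * (K+1)^(q-1) :=
    mul_nonneg (Real.rpow_nonneg (by linarith) _) (Real.rpow_nonneg (by linarith) _)
  have hmain : ∫ x in Ω, |v x| ^ q ≤ A * I := by
    calc ∫ x in Ω, |v x| ^ q
        ≤ ∫ x in Ω, (2*R)^q * (K+1)^(q-1) * (∫ t in Ioc (0:ℝ) 1, W x t) :=
          setIntegral_mono_on h_vq_int (hJ_int.const_mul _) hmeas hptwise
      _ = (2*R)^q * (K+1)^(q-1) * ∫ x in Ω, (∫ t in Ioc (0:ℝ) 1, W x t) :=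
          integral_const_mul _ _
      _ ≤ (2*R)^q * (K+1)^(q-1) * (M * I) := mul_le_mul_of_nonneg_left hineq2 hX0
      _ = ((2*R)^q * (K+1)^(q-1) * M) * I := by ring
      _ ≤ A * I := by
          apply mul_le_mul_of_nonneg_right _ hI0
          rw [hA_def]
          exact mul_le_mul_of_nonneg_left (by linarith) hX0
  have hLHS0 : 0 ≤ ∫ x in Ω, |v x| ^ q :=
    setIntegral_nonneg hmeas fun x _ => Real.rpow_nonneg (abs_nonneg _) _
  have hfinal : (∫ x in Ω, |v x| ^ q) ^ (1/q) ≤ A ^ (1/q) * I ^ (1/q) := by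
    calc (∫ x in Ω, |v x| ^ q) ^ (1/q) ≤ (A * I) ^ (1/q) :=
          Real.rpow_le_rpow hLHS0 hmain (by positivity)
      _ = A ^ (1/q) * I ^ (1/q) := Real.mul_rpow hA0.le hI0
  simpa only [hI_def, hg_def, hDv_def] using hfinal
end

section
/- Let Ω ⊂ ℝ^N be a nonempty bounded open set with closure cl(Ω), let α > 0 and β > 1 be real numbers, let w : cl(Ω) → ℝ be continuous with w ≥ 0 and w not identically zero on Ω, and let z : cl(Ω) → ℝ be continuous. Then there exists a constant K with inf_{cl(Ω)} z ≤ K ≤ sup_{cl(Ω)} z such that ∫_Ω w(x)^α · |z(x) − K|^{β−2} (z(x) − K) dx = 0. -/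
open Real Set MeasureTheory

lemma abs_g_eq (β : ℝ) (hβ : 1 < β) (t : ℝ) :
    |(|t| ^ (β - 2)) * t| = |t| ^ (β - 1) := by
  rcases eq_or_ne t 0 with rfl | ht
  · simp [Real.zero_rpow (by linarith : β - 1 ≠ 0)]
  · have hpos : (0:ℝ) < |t| := abs_pos.2 ht
    rw [abs_mul, abs_of_nonneg (Real.rpow_nonneg (abs_nonneg t) _)]
    rw [show β - 1 = (β - 2) + 1 by ring, Real.rpow_add_one hpos.ne']

lemma g_cont (β : ℝ) (hβ : 1 < β) :
    Continuous fun t : ℝ => (|t| ^ (β - 2)) * t := by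
  rw [continuous_iff_continuousAt]
  intro t
  rcases eq_or_ne t 0 with rfl | ht
  · have h0 : (|(0:ℝ)| ^ (β - 2)) * 0 = 0 := by ring
    rw [ContinuousAt, h0]
    apply squeeze_zero_norm (fun s => (abs_g_eq β hβ s).le)
    have : ContinuousAt (fun s : ℝ => |s| ^ (β - 1)) 0 :=
      (Real.continuousAt_rpow_const _ _ (Or.inr (by linarith))).comp
        continuous_abs.continuousAt
    have h := this.tendsto
    simpa [Real.zero_rpow (by linarith : β - 1 ≠ 0)] using h
  · exact ((Real.continuousAt_rpow_const _ _ (Or.inl (abs_ne_zero.2 ht))).comp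
      continuous_abs.continuousAt).mul continuousAt_id

/-- Existence of the normalizing constant `K`: for continuous `w ≥ 0`, `w ≢ 0` on `Ω`,
continuous `z`, `α > 0` and `β > 1`, there is `K` with
`inf_{cl Ω} z ≤ K ≤ sup_{cl Ω} z` and `∫_Ω w^α |z-K|^{β-2}(z-K) = 0`. -/
theorem normalizing_constant_exists (N : ℕ) (Ω : Set (EuclideanSpace ℝ (Fin N)))
    (hne : Ω.Nonempty) (hb : Bornology.IsBounded Ω) (ho : IsOpen Ω)
    (α β : ℝ) (hα : 0 < α) (hβ : 1 < β)
    (w z : EuclideanSpace ℝ (Fin N) → ℝ)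
    (hw : ContinuousOn w (closure Ω)) (hz : ContinuousOn z (closure Ω))
    (hwnn : ∀ x ∈ closure Ω, 0 ≤ w x)
    (hw0 : ∃ x ∈ Ω, w x ≠ 0) :
    ∃ K : ℝ, sInf (z '' closure Ω) ≤ K ∧ K ≤ sSup (z '' closure Ω) ∧
      ∫ x in Ω, w x ^ α * (|z x - K| ^ (β - 2) * (z x - K)) = 0 := by
  set C := closure Ω with hC
  have hCc : IsCompact C := Metric.isCompact_of_isClosed_isBounded isClosed_closure hb.closure
  have hCne : C.Nonempty := hne.closure
  have hzim : IsCompact (z '' C) := hCc.image_of_continuousOn hz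
  have hbdd : BddAbove (z '' C) := hzim.bddAbove
  have hbddb : BddBelow (z '' C) := hzim.bddBelow
  set m := sInf (z '' C) with hm
  set M := sSup (z '' C) with hM
  have hmM : m ≤ M := csInf_le_csSup (hCne.image z) hbddb hbdd
  -- bounds for w and z
  obtain ⟨Cw, hCw⟩ := hCc.exists_bound_of_continuousOn hw
  obtain ⟨Cz, hCz⟩ := hCc.exists_bound_of_continuousOn hz
  -- the function F
  set F : ℝ → ℝ := fun K => ∫ x in Ω, w x ^ α * (|z x - K| ^ (β - 2) * (z x - K)) with hF
  have hsub : Ω ⊆ C := subset_closure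
  have hμ : volume Ω < ⊤ := hb.measure_lt_top
  -- measurability of integrand for each K
  have hmeas : ∀ K : ℝ, AEStronglyMeasurable
      (fun x => w x ^ α * (|z x - K| ^ (β - 2) * (z x - K))) (volume.restrict Ω) := by
    intro K
    have hcont : ContinuousOn
        (fun x => w x ^ α * (|z x - K| ^ (β - 2) * (z x - K))) Ω := by
      have h1 : ContinuousOn (fun x => w x ^ α) Ω :=
        (hw.mono hsub).rpow_const (fun x _ => Or.inr hα.le)
      have h2 : ContinuousOn (fun x => |z x - K| ^ (β - 2) * (z x - K)) Ω :=
        (g_cont β hβ).comp_continuousOn ((hz.mono hsub).sub continuousOn_const)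
      exact h1.mul h2
    exact hcont.aestronglyMeasurable ho.measurableSet
  -- continuity of F
  have hFc : Continuous F := by
    rw [continuous_iff_continuousAt]
    intro K₀
    have hb' : Integrable (fun _ : EuclideanSpace ℝ (Fin N) =>
        (Cw + 1) ^ α * (Cz + |K₀| + 1) ^ (β - 1)) (volume.restrict Ω) := by
      exact integrableOn_const hμ.ne
    apply MeasureTheory.continuousAt_of_dominated
      (bound := fun _ => (Cw + 1) ^ α * (Cz + |K₀| + 1) ^ (β - 1))
    · exact Filter.Eventually.of_forall hmeas
    · filter_upwards [Metric.ball_mem_nhds K₀ one_pos] with K hK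
      filter_upwards [ae_restrict_mem ho.measurableSet] with x hx
      have hxC : x ∈ C := hsub hx
      have hw1 : (0:ℝ) ≤ w x := hwnn x hxC
      have hw2 : w x ≤ Cw + 1 := by
        have := hCw x hxC; rw [Real.norm_eq_abs, abs_of_nonneg hw1] at this; linarith
      have hz1 : |z x - K| ≤ Cz + |K₀| + 1 := by
        have h1 := hCz x hxC
        rw [Real.norm_eq_abs] at h1
        have h2 : |K - K₀| < 1 := by simpa [Real.dist_eq] using hK
        calc |z x - K| ≤ |z x| + |K| := abs_sub _ _
          _ ≤ Cz + |K₀| + 1 := by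
              have : |K| ≤ |K₀| + |K - K₀| := by
                calc |K| = |K₀ + (K - K₀)| := by ring_nf
                  _ ≤ |K₀| + |K - K₀| := abs_add_le _ _
              linarith
      rw [Real.norm_eq_abs, abs_mul, abs_of_nonneg (Real.rpow_nonneg hw1 α),
        abs_g_eq β hβ]
      have e1 : w x ^ α ≤ (Cw + 1) ^ α := Real.rpow_le_rpow hw1 hw2 hα.le
      have e2 : |z x - K| ^ (β - 1) ≤ (Cz + |K₀| + 1) ^ (β - 1) :=
        Real.rpow_le_rpow (abs_nonneg _) hz1 (by linarith)
      exact mul_le_mul e1 e2 (Real.rpow_nonneg (abs_nonneg _) _)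
          (Real.rpow_nonneg (hw1.trans hw2) _)
    · exact hb'
    · filter_upwards with x
      exact (continuousAt_const.mul (((g_cont β hβ).comp
        (continuous_const.sub continuous_id)).continuousAt))
  -- sign at endpoints
  have hFM : F M ≤ 0 := by
    apply setIntegral_nonpos ho.measurableSet
    intro x hx
    have hxC : x ∈ C := hsub hx
    have h1 : z x - M ≤ 0 := by
      have : z x ≤ M := le_csSup hbdd ⟨x, hxC, rfl⟩
      linarith
    have h2 : (0:ℝ) ≤ |z x - M| ^ (β - 2) := Real.rpow_nonneg (abs_nonneg _) _
    have h3 : (0:ℝ) ≤ w x ^ α := Real.rpow_nonneg (hwnn x hxC) _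
    nlinarith [mul_nonneg h2 (neg_nonneg.2 h1)]
  have hFm : 0 ≤ F m := by
    apply setIntegral_nonneg ho.measurableSet
    intro x hx
    have hxC : x ∈ C := hsub hx
    have h1 : 0 ≤ z x - m := by
      have : m ≤ z x := csInf_le hbddb ⟨x, hxC, rfl⟩
      linarith
    have h2 : (0:ℝ) ≤ |z x - m| ^ (β - 2) := Real.rpow_nonneg (abs_nonneg _) _
    have h3 : (0:ℝ) ≤ w x ^ α := Real.rpow_nonneg (hwnn x hxC) _
    positivity
  -- intermediate value theorem
  have := intermediate_value_Icc' hmM hFc.continuousOn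
  have h0 : (0:ℝ) ∈ Icc (F M) (F m) := ⟨hFM, hFm⟩
  obtain ⟨K, hK1, hK2⟩ := this h0
  exact ⟨K, hK1.1, hK1.2, hK2⟩
end
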